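/- arXiv:2506.08720 — 2 statements merged into one kernel-verified Lean document; each statement's English description precedes it below -/
import Mathlib

section
/- Let H, Z be real m×n matrices, set Ĥ = H + Z, and let k ≤ min(m,n). Then ‖Π_k(Ĥ) − H‖_F ≤ 2‖Π_{2k}(Z)‖_F + 3‖H − Π_k(H)‖_F. -/
open Matrix Finset

attribute [local instance] Classical.propDecidable

/-- Frobenius norm of a real matrix. -/
noncomputable def frobNorm {m n : ℕ} (A : Matrix (Fin m) (Fin n) ℝ) : ℝ :=
  Real.sqrt (∑ i, ∑ j, (A i j) ^ 2)

/-- Frobenius inner product ⟨A,B⟩ = trace(AᵀB). -/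
noncomputable def frobInner {m n : ℕ} (A B : Matrix (Fin m) (Fin n) ℝ) : ℝ :=
  ∑ i, ∑ j, A i j * B i j

/-- Operator (spectral) norm of a real matrix w.r.t. Euclidean norms. -/
noncomputable def specNorm {m n : ℕ} (A : Matrix (Fin m) (Fin n) ℝ) : ℝ :=
  ⨆ x : {x : Fin n → ℝ // ∑ a, x a ^ 2 ≤ 1}, Real.sqrt (∑ a, (A.mulVec x.1) a ^ 2)

/-- A singular value decomposition of `M`: `M = ∑ i, s i • u i (v i)ᵀ` with
orthonormal `u`, `v` and nonincreasing nonnegative singular values `s`. -/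
structure SVDOf {m n : ℕ} (M : Matrix (Fin m) (Fin n) ℝ) where
  s : Fin (min m n) → ℝ
  u : Fin (min m n) → Fin m → ℝ
  v : Fin (min m n) → Fin n → ℝ
  s_nonneg : ∀ i, 0 ≤ s i
  s_anti : ∀ i j : Fin (min m n), i ≤ j → s j ≤ s i
  u_orth : ∀ i j, (∑ a, u i a * u j a) = if i = j then (1 : ℝ) else 0
  v_orth : ∀ i j, (∑ a, v i a * v j a) = if i = j then (1 : ℝ) else 0
  decomp : M = ∑ i, Matrix.of fun a b => s i * u i a * v i b

/-- Truncated SVD `Π_k(M)`: keep the `k` largest singular values. -/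
noncomputable def SVDOf.trunc {m n : ℕ} {M : Matrix (Fin m) (Fin n) ℝ}
    (D : SVDOf M) (k : ℕ) : Matrix (Fin m) (Fin n) ℝ :=
  ∑ i ∈ Finset.univ.filter (fun i : Fin (min m n) => (i : ℕ) < k),
    Matrix.of fun a b => D.s i * D.u i a * D.v i b

/-- Hard singular value thresholding `M(ξ)`: keep singular values `≥ ξ`. -/
noncomputable def SVDOf.thresh {m n : ℕ} {M : Matrix (Fin m) (Fin n) ℝ}
    (D : SVDOf M) (ξ : ℝ) : Matrix (Fin m) (Fin n) ℝ :=
  ∑ i ∈ Finset.univ.filter (fun i : Fin (min m n) => ξ ≤ D.s i),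
    Matrix.of fun a b => D.s i * D.u i a * D.v i b

namespace Stmt3Aux

def dot {n : ℕ} (x y : Fin n → ℝ) : ℝ := ∑ a, x a * y a

lemma dot_self_nonneg {n : ℕ} (x : Fin n → ℝ) : 0 ≤ dot x x :=
  Finset.sum_nonneg fun _ _ => mul_self_nonneg _

lemma dot_comm {n : ℕ} (x y : Fin n → ℝ) : dot x y = dot y x :=
  Finset.sum_congr rfl fun a _ => mul_comm _ _

lemma dot_smul_smul {n : ℕ} (x y : Fin n → ℝ) (c d : ℝ) :
    dot (fun a => c * x a) (fun a => d * y a) = c * d * dot x y := by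
  simp only [dot, Finset.mul_sum]
  exact Finset.sum_congr rfl fun a _ => by ring

def ONF {n : ℕ} {ι : Type*} [Fintype ι] [DecidableEq ι] (g : ι → Fin n → ℝ) : Prop :=
  ∀ i j, dot (g i) (g j) = if i = j then (1:ℝ) else 0

lemma sum_dot {p : ℕ} {ι κ : Type*} (F : Finset ι) (G : Finset κ)
    (f : ι → Fin p → ℝ) (h : κ → Fin p → ℝ) :
    dot (fun b => ∑ i ∈ F, f i b) (fun b => ∑ j ∈ G, h j b)
      = ∑ i ∈ F, ∑ j ∈ G, dot (f i) (h j) := by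
  simp only [dot, Finset.sum_mul_sum]
  rw [Finset.sum_comm]
  refine Finset.sum_congr rfl fun i _ => Finset.sum_comm

lemma dot_sum_right {p : ℕ} {κ : Type*} (x : Fin p → ℝ) (F : Finset κ) (f : κ → Fin p → ℝ) :
    dot x (fun b => ∑ j ∈ F, f j b) = ∑ j ∈ F, dot x (f j) := by
  simp only [dot, Finset.mul_sum]
  exact Finset.sum_comm

def projv {n : ℕ} {ι : Type*} [Fintype ι] (g : ι → Fin n → ℝ) (v : Fin n → ℝ) : Fin n → ℝ :=
  fun b => ∑ i, dot (g i) v * g i b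

def qv {n : ℕ} {ι : Type*} [Fintype ι] (g : ι → Fin n → ℝ) (v : Fin n → ℝ) : ℝ :=
  ∑ i, dot (g i) v ^ 2

lemma qv_nonneg {n : ℕ} {ι : Type*} [Fintype ι] (g : ι → Fin n → ℝ) (v : Fin n → ℝ) :
    0 ≤ qv g v := Finset.sum_nonneg fun _ _ => sq_nonneg _

lemma projv_dot_self {n : ℕ} {ι : Type*} [Fintype ι] [DecidableEq ι] {g : ι → Fin n → ℝ} (hg : ONF g)
    (v : Fin n → ℝ) : dot (projv g v) (projv g v) = qv g v := by
  have h1 : dot (projv g v) (projv g v)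
      = ∑ i, ∑ j, dot (fun b => dot (g i) v * g i b) (fun b => dot (g j) v * g j b) :=
    sum_dot univ univ _ _
  rw [h1]
  have h2 : ∀ i j : ι, dot (fun b => dot (g i) v * g i b) (fun b => dot (g j) v * g j b)
      = dot (g i) v * dot (g j) v * dot (g i) (g j) := fun i j => dot_smul_smul _ _ _ _
  simp only [h2]
  rw [qv]
  refine Finset.sum_congr rfl fun i _ => ?_
  rw [Finset.sum_eq_single i]
  · rw [hg i i, if_pos rfl]; ring
  · intro j _ hj; rw [hg i j, if_neg (Ne.symm hj)]; ring
  · simp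

lemma dot_projv {n : ℕ} {ι : Type*} [Fintype ι] (g : ι → Fin n → ℝ)
    (v : Fin n → ℝ) : dot v (projv g v) = qv g v := by
  have h1 : dot v (projv g v) = ∑ i, dot v (fun b => dot (g i) v * g i b) :=
    dot_sum_right v univ _
  rw [h1, qv]
  refine Finset.sum_congr rfl fun i _ => ?_
  have h2 : dot (fun a => (1:ℝ) * v a) (fun b => dot (g i) v * g i b)
      = 1 * dot (g i) v * dot v (g i) := dot_smul_smul _ _ _ _
  simp only [one_mul] at h2
  rw [h2, dot_comm v (g i)]; ring

lemma dot_sub_sub {n : ℕ} (x y : Fin n → ℝ) :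
    dot (fun a => x a - y a) (fun a => x a - y a)
      = dot x x - 2 * dot x y + dot y y := by
  simp only [dot, Finset.mul_sum]
  rw [← Finset.sum_sub_distrib, ← Finset.sum_add_distrib]
  exact Finset.sum_congr rfl fun a _ => by ring

lemma bessel {n : ℕ} {ι : Type*} [Fintype ι] [DecidableEq ι] {g : ι → Fin n → ℝ} (hg : ONF g)
    (v : Fin n → ℝ) : qv g v ≤ dot v v := by
  have h0 : 0 ≤ dot (fun b => v b - projv g v b) (fun b => v b - projv g v b) :=
    dot_self_nonneg _
  rw [dot_sub_sub, dot_projv g, projv_dot_self hg] at h0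
  linarith

/-- the key sum engine -/
lemma ENG {m n : ℕ} {ι : Type*} [DecidableEq ι] (F : Finset ι) (c : ι → ℝ) (u : ι → Fin m → ℝ)
    (hu : ∀ i ∈ F, ∀ j ∈ F, dot (u i) (u j) = if i = j then (1:ℝ) else 0)
    (w : ι → Fin n → ℝ) :
    (∑ a, ∑ b, (∑ i ∈ F, c i * u i a * w i b) ^ 2)
      = ∑ i ∈ F, c i ^ 2 * dot (w i) (w i) := by
  have step1 : ∀ a : Fin m, (∑ b, (∑ i ∈ F, c i * u i a * w i b) ^ 2)
      = ∑ i ∈ F, ∑ j ∈ F, (c i * u i a) * (c j * u j a) * dot (w i) (w j) := by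
    intro a
    have h0 : (∑ b, (∑ i ∈ F, c i * u i a * w i b) ^ 2)
        = dot (fun b => ∑ i ∈ F, (c i * u i a) * w i b)
            (fun b => ∑ j ∈ F, (c j * u j a) * w j b) := by
      simp only [dot]
      exact Finset.sum_congr rfl fun b _ => by rw [sq]
    rw [h0, sum_dot]
    refine Finset.sum_congr rfl fun i _ => Finset.sum_congr rfl fun j _ => ?_
    exact dot_smul_smul _ _ _ _
  simp only [step1]
  rw [Finset.sum_comm]
  refine Finset.sum_congr rfl fun i hi => ?_
  rw [Finset.sum_comm]
  have step2 : ∀ j ∈ F, (∑ a, (c i * u i a) * (c j * u j a) * dot (w i) (w j))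
      = c i * c j * dot (u i) (u j) * dot (w i) (w j) := by
    intro j _
    rw [← Finset.sum_mul, ← dot_smul_smul (u i) (u j) (c i) (c j)]
    rfl
  rw [Finset.sum_congr rfl step2]
  rw [Finset.sum_eq_single_of_mem i hi]
  · rw [hu i hi i hi, if_pos rfl]; ring
  · intro j hj hji; rw [hu i hi j hj, if_neg (Ne.symm hji)]; ring

lemma card_filter_lt {N : ℕ} (r : ℕ) (h : r ≤ N) :
    (Finset.univ.filter fun i : Fin N => (i : ℕ) < r).card = r := by
  have : (Finset.univ.filter fun i : Fin N => (i : ℕ) < r)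
      = Finset.map (Fin.castLEEmb h) Finset.univ := by
    ext i
    simp only [Finset.mem_filter, Finset.mem_univ, true_and, Finset.mem_map]
    constructor
    · intro hi; exact ⟨⟨(i : ℕ), hi⟩, by ext; rfl⟩
    · rintro ⟨j, _, rfl⟩; simpa [Fin.castLEEmb, Fin.castLE] using j.2
  rw [this, Finset.card_map, Finset.card_univ, Fintype.card_fin]

/-- rearrangement bound -/
lemma rearrange {N r : ℕ} (a q : Fin N → ℝ)
    (hanti : ∀ i j : Fin N, i ≤ j → a j ≤ a i) (ha : ∀ i, 0 ≤ a i)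
    (hq0 : ∀ i, 0 ≤ q i) (hq1 : ∀ i, q i ≤ 1) (hqs : ∑ i, q i ≤ (r : ℝ)) :
    ∑ i, a i * q i ≤ ∑ i ∈ Finset.univ.filter (fun i : Fin N => (i : ℕ) < r), a i := by
  by_cases hrN : r < N
  · set ir : Fin N := ⟨r, hrN⟩ with hir
    set F := Finset.univ.filter (fun i : Fin N => (i : ℕ) < r) with hF
    set G := Finset.univ.filter (fun i : Fin N => ¬ (i : ℕ) < r) with hG
    have hsplit : ∑ i, a i * q i = ∑ i ∈ F, a i * q i + ∑ i ∈ G, a i * q i :=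
      (Finset.sum_filter_add_sum_filter_not univ _ _).symm
    have hsplitq : ∑ i, q i = ∑ i ∈ F, q i + ∑ i ∈ G, q i :=
      (Finset.sum_filter_add_sum_filter_not univ _ _).symm
    have hcard : (F.card : ℝ) = r := by
      rw [hF, card_filter_lt r (le_of_lt hrN)]
    have hG1 : ∑ i ∈ G, a i * q i ≤ a ir * ∑ i ∈ G, q i := by
      rw [Finset.mul_sum]
      refine Finset.sum_le_sum fun i hi => ?_
      have hiG : r ≤ (i : ℕ) := by
        have := Finset.mem_filter.mp hi
        omega
      have : a i ≤ a ir := hanti ir i (by simpa [hir, Fin.le_def] using hiG)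
      exact mul_le_mul_of_nonneg_right this (hq0 i)
    have hG2 : ∑ i ∈ G, q i ≤ ∑ i ∈ F, (1 - q i) := by
      rw [Finset.sum_sub_distrib, Finset.sum_const, nsmul_eq_mul, mul_one]
      have : ∑ i ∈ G, q i = ∑ i, q i - ∑ i ∈ F, q i := by rw [hsplitq]; ring
      rw [this, hcard]
      linarith
    have hG3 : a ir * ∑ i ∈ F, (1 - q i) ≤ ∑ i ∈ F, a i * (1 - q i) := by
      rw [Finset.mul_sum]
      refine Finset.sum_le_sum fun i hi => ?_
      have hiF : (i : ℕ) < r := (Finset.mem_filter.mp hi).2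
      have : a ir ≤ a i := hanti i ir (by simpa [hir, Fin.le_def] using le_of_lt hiF)
      exact mul_le_mul_of_nonneg_right this (by linarith [hq1 i])
    have hG4 : ∑ i ∈ G, a i * q i ≤ ∑ i ∈ F, a i * (1 - q i) := by
      calc ∑ i ∈ G, a i * q i ≤ a ir * ∑ i ∈ G, q i := hG1
        _ ≤ a ir * ∑ i ∈ F, (1 - q i) := mul_le_mul_of_nonneg_left hG2 (ha ir)
        _ ≤ ∑ i ∈ F, a i * (1 - q i) := hG3
    have : ∑ i ∈ F, a i * q i + ∑ i ∈ F, a i * (1 - q i) = ∑ i ∈ F, a i := by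
      rw [← Finset.sum_add_distrib]
      exact Finset.sum_congr rfl fun i _ => by ring
    linarith [hsplit, hG4, this]
  · have hfull : Finset.univ.filter (fun i : Fin N => (i : ℕ) < r) = Finset.univ := by
      refine Finset.filter_true_of_mem fun i _ => ?_
      have := i.isLt; omega
    rw [hfull]
    exact Finset.sum_le_sum fun i _ => by
      have := mul_le_mul_of_nonneg_left (hq1 i) (ha i)
      simpa using this

-- continuing namespace Stmt3Aux (to be appended)
section MatrixLayer

def frobSq {m n : ℕ} (W : Matrix (Fin m) (Fin n) ℝ) : ℝ := ∑ a, ∑ b, W a b ^ 2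

lemma frobSq_nonneg {m n : ℕ} (W : Matrix (Fin m) (Fin n) ℝ) : 0 ≤ frobSq W :=
  Finset.sum_nonneg fun _ _ => Finset.sum_nonneg fun _ _ => sq_nonneg _

lemma frobNorm_eq_sqrt {m n : ℕ} (W : Matrix (Fin m) (Fin n) ℝ) :
    frobNorm W = Real.sqrt (frobSq W) := rfl

lemma frobNorm_nonneg {m n : ℕ} (W : Matrix (Fin m) (Fin n) ℝ) : 0 ≤ frobNorm W :=
  Real.sqrt_nonneg _

lemma frobNorm_sq {m n : ℕ} (W : Matrix (Fin m) (Fin n) ℝ) :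
    frobNorm W ^ 2 = frobSq W := Real.sq_sqrt (frobSq_nonneg W)

lemma frobNorm_le_of_frobSq_le {m n : ℕ} {W V : Matrix (Fin m) (Fin n) ℝ}
    (h : frobSq W ≤ frobSq V) : frobNorm W ≤ frobNorm V :=
  Real.sqrt_le_sqrt h

lemma frobSq_neg_sub {m n : ℕ} (X Y : Matrix (Fin m) (Fin n) ℝ) :
    frobSq (X - Y) = frobSq (Y - X) := by
  refine Finset.sum_congr rfl fun a _ => Finset.sum_congr rfl fun b _ => ?_
  simp only [Matrix.sub_apply]
  ring

lemma frobSq_add_expand {m n : ℕ} (X Y : Matrix (Fin m) (Fin n) ℝ) :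
    frobSq (X + Y) = frobSq X + 2 * frobInner X Y + frobSq Y := by
  simp only [frobSq, frobInner, Matrix.add_apply, Finset.mul_sum,
    ← Finset.sum_add_distrib]
  exact Finset.sum_congr rfl fun a _ => Finset.sum_congr rfl fun b _ => by ring

lemma frobInner_add_left {m n : ℕ} (X Y Z : Matrix (Fin m) (Fin n) ℝ) :
    frobInner (X + Y) Z = frobInner X Z + frobInner Y Z := by
  simp only [frobInner, Matrix.add_apply, ← Finset.sum_add_distrib]
  exact Finset.sum_congr rfl fun a _ => Finset.sum_congr rfl fun b _ => by ring

lemma frobInner_self {m n : ℕ} (Z : Matrix (Fin m) (Fin n) ℝ) :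
    frobInner Z Z = frobSq Z := by
  refine Finset.sum_congr rfl fun a _ => Finset.sum_congr rfl fun b _ => (sq _).symm

/-- Cauchy-Schwarz for the Frobenius inner product -/
lemma frobInner_le {m n : ℕ} (X Y : Matrix (Fin m) (Fin n) ℝ) :
    frobInner X Y ≤ frobNorm X * frobNorm Y := by
  have hX : frobSq X = ∑ p : Fin m × Fin n, X p.1 p.2 ^ 2 := (Fintype.sum_prod_type' (f := fun a b => X a b ^ 2)).symm
  have hY : frobSq Y = ∑ p : Fin m × Fin n, Y p.1 p.2 ^ 2 := (Fintype.sum_prod_type' (f := fun a b => Y a b ^ 2)).symm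
  have hI : frobInner X Y = ∑ p : Fin m × Fin n, X p.1 p.2 * Y p.1 p.2 :=
    (Fintype.sum_prod_type' (f := fun a b => X a b * Y a b)).symm
  have cs := Finset.sum_mul_sq_le_sq_mul_sq Finset.univ
    (fun p : Fin m × Fin n => X p.1 p.2) (fun p => Y p.1 p.2)
  have h1 : frobInner X Y ≤ |frobInner X Y| := le_abs_self _
  have h2 : |frobInner X Y| = Real.sqrt (frobInner X Y ^ 2) := (Real.sqrt_sq_eq_abs _).symm
  have h3 : frobInner X Y ^ 2 ≤ frobSq X * frobSq Y := by
    rw [hX, hY, hI]; exact cs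
  calc frobInner X Y ≤ Real.sqrt (frobInner X Y ^ 2) := by rw [← h2]; exact h1
    _ ≤ Real.sqrt (frobSq X * frobSq Y) := Real.sqrt_le_sqrt h3
    _ = frobNorm X * frobNorm Y := by
        rw [Real.sqrt_mul (frobSq_nonneg X), frobNorm_eq_sqrt, frobNorm_eq_sqrt]

lemma frobNorm_triangle {m n : ℕ} (X Y : Matrix (Fin m) (Fin n) ℝ) :
    frobNorm (X + Y) ≤ frobNorm X + frobNorm Y := by
  have h1 : frobSq (X + Y) ≤ (frobNorm X + frobNorm Y) ^ 2 := by
    rw [frobSq_add_expand]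
    have := frobInner_le X Y
    have hX := frobNorm_sq X
    have hY := frobNorm_sq Y
    nlinarith
  calc frobNorm (X + Y) = Real.sqrt (frobSq (X + Y)) := rfl
    _ ≤ Real.sqrt ((frobNorm X + frobNorm Y) ^ 2) := Real.sqrt_le_sqrt h1
    _ = frobNorm X + frobNorm Y := Real.sqrt_sq (add_nonneg (frobNorm_nonneg X) (frobNorm_nonneg Y))

end MatrixLayer

section SVDLayer

variable {m n : ℕ}

lemma dot_smul_right {p : ℕ} (x y : Fin p → ℝ) (c : ℝ) :
    dot x (fun a => c * y a) = c * dot x y := by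
  simp only [dot, Finset.mul_sum]
  exact Finset.sum_congr rfl fun a _ => by ring

lemma dot_sub_right {p : ℕ} (x y z : Fin p → ℝ) :
    dot x (fun a => y a - z a) = dot x y - dot x z := by
  simp only [dot, ← Finset.sum_sub_distrib]
  exact Finset.sum_congr rfl fun a _ => by ring

lemma projv_sum_smul {ι κ : Type*} [Fintype ι] (g : ι → Fin n → ℝ)
    (F : Finset κ) (t : κ → ℝ) (w : κ → Fin n → ℝ) (b : Fin n) :
    projv g (fun x => ∑ i ∈ F, t i * w i x) b = ∑ i ∈ F, t i * projv g (w i) b := by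
  have h1 : ∀ j : ι, dot (g j) (fun x => ∑ i ∈ F, t i * w i x)
      = ∑ i ∈ F, t i * dot (g j) (w i) := fun j => by
    rw [dot_sum_right]
    exact Finset.sum_congr rfl fun i _ => dot_smul_right _ _ _
  simp only [projv, h1, Finset.sum_mul]
  rw [Finset.sum_comm]
  refine Finset.sum_congr rfl fun i _ => ?_
  rw [Finset.mul_sum]
  exact Finset.sum_congr rfl fun j _ => by ring

lemma projv_sub {ι : Type*} [Fintype ι] (g : ι → Fin n → ℝ) (v w : Fin n → ℝ) (b : Fin n) :
    projv g (fun x => v x - w x) b = projv g v b - projv g w b := by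
  simp only [projv, dot_sub_right, ← Finset.sum_sub_distrib]
  exact Finset.sum_congr rfl fun j _ => by ring

/-- projection applied to each row of a matrix -/
def rowProj {ι : Type*} [Fintype ι] (g : ι → Fin n → ℝ)
    (W : Matrix (Fin m) (Fin n) ℝ) : Matrix (Fin m) (Fin n) ℝ :=
  Matrix.of fun a b => projv g (fun c => W a c) b

lemma rowProj_sub {ι : Type*} [Fintype ι] (g : ι → Fin n → ℝ)
    (X Y : Matrix (Fin m) (Fin n) ℝ) :
    rowProj g (X - Y) = rowProj g X - rowProj g Y := by
  ext a b
  simp only [rowProj, Matrix.of_apply, Matrix.sub_apply]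
  exact projv_sub g _ _ b

lemma frobSq_sumMat {ι : Type*} [DecidableEq ι] (F : Finset ι) (c : ι → ℝ) (u : ι → Fin m → ℝ)
    (hu : ∀ i ∈ F, ∀ j ∈ F, dot (u i) (u j) = if i = j then (1:ℝ) else 0)
    (w : ι → Fin n → ℝ) :
    frobSq (∑ i ∈ F, Matrix.of fun a b => c i * u i a * w i b)
      = ∑ i ∈ F, c i ^ 2 * dot (w i) (w i) := by
  simp only [frobSq, Matrix.sum_apply, Matrix.of_apply]
  exact ENG F c u hu w

lemma rowProj_sumMat {ι κ : Type*} [Fintype ι] (g : ι → Fin n → ℝ)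
    (F : Finset κ) (c : κ → ℝ) (u : κ → Fin m → ℝ) (w : κ → Fin n → ℝ) :
    rowProj g (∑ i ∈ F, Matrix.of fun a b => c i * u i a * w i b)
      = ∑ i ∈ F, Matrix.of fun a b => c i * u i a * projv g (w i) b := by
  ext a b
  simp only [rowProj, Matrix.of_apply, Matrix.sum_apply]
  exact projv_sum_smul g F (fun i => c i * u i a) w b

lemma frobSq_sub_rowProj_le {ι : Type*} [Fintype ι] [DecidableEq ι] {g : ι → Fin n → ℝ} (hg : ONF g)
    (W : Matrix (Fin m) (Fin n) ℝ) :
    frobSq (W - rowProj g W) ≤ frobSq W := by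
  simp only [frobSq, Matrix.sub_apply, rowProj, Matrix.of_apply]
  refine Finset.sum_le_sum fun a _ => ?_
  have h1 : ∑ b, (W a b - projv g (fun c => W a c) b) ^ 2
      = dot (fun b => (fun c => W a c) b - projv g (fun c => W a c) b)
          (fun b => (fun c => W a c) b - projv g (fun c => W a c) b) := by
    simp only [dot]
    exact Finset.sum_congr rfl fun b _ => by rw [sq]
  have h2 : ∑ b, W a b ^ 2 = dot (fun c => W a c) (fun c => W a c) := by
    simp only [dot]
    exact Finset.sum_congr rfl fun b _ => by rw [sq]
  rw [h1, h2, dot_sub_sub, dot_projv g, projv_dot_self hg]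
  have := qv_nonneg g (fun c => W a c)
  linarith

end SVDLayer

section SVDSpecific

variable {m n : ℕ} {M : Matrix (Fin m) (Fin n) ℝ}

lemma onf_v (D : SVDOf M) : ONF D.v := fun i j => D.v_orth i j

lemma dot_v_self (D : SVDOf M) (i : Fin (min m n)) : dot (D.v i) (D.v i) = 1 := by
  have h := D.v_orth i i
  simp only [if_pos rfl] at h
  exact h

lemma hu_dot (D : SVDOf M) : ∀ i ∈ (univ : Finset (Fin (min m n))), ∀ j ∈ univ,
    dot (D.u i) (D.u j) = if i = j then (1:ℝ) else 0 := fun i _ j _ => D.u_orth i j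

lemma hu_dot' (D : SVDOf M) (F : Finset (Fin (min m n))) : ∀ i ∈ F, ∀ j ∈ F,
    dot (D.u i) (D.u j) = if i = j then (1:ℝ) else 0 := fun i _ j _ => D.u_orth i j

lemma frobSq_trunc (D : SVDOf M) (k : ℕ) :
    frobSq (D.trunc k)
      = ∑ i ∈ Finset.univ.filter (fun i : Fin (min m n) => (i : ℕ) < k), D.s i ^ 2 := by
  rw [SVDOf.trunc, frobSq_sumMat _ _ _ (hu_dot' D _)]
  exact Finset.sum_congr rfl fun i _ => by rw [dot_v_self D i, mul_one]

lemma tail_eq (D : SVDOf M) (k : ℕ) :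
    M - D.trunc k
      = ∑ i ∈ Finset.univ.filter (fun i : Fin (min m n) => ¬ (i : ℕ) < k),
          Matrix.of fun a b => D.s i * D.u i a * D.v i b := by
  have hsplit := Finset.sum_filter_add_sum_filter_not (univ : Finset (Fin (min m n)))
    (fun i => (i : ℕ) < k) (fun i => Matrix.of fun a b => D.s i * D.u i a * D.v i b)
  rw [sub_eq_iff_eq_add']
  conv_lhs => rw [D.decomp]
  rw [SVDOf.trunc]
  exact hsplit.symm

lemma frobSq_tail (D : SVDOf M) (k : ℕ) :
    frobSq (M - D.trunc k)
      = ∑ i ∈ Finset.univ.filter (fun i : Fin (min m n) => ¬ (i : ℕ) < k), D.s i ^ 2 := by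
  rw [tail_eq D k, frobSq_sumMat _ _ _ (hu_dot' D _)]
  exact Finset.sum_congr rfl fun i _ => by rw [dot_v_self D i, mul_one]

lemma frobSq_rowProj_svd {ι : Type*} [Fintype ι] [DecidableEq ι] (D : SVDOf M) {g : ι → Fin n → ℝ}
    (hg : ONF g) :
    frobSq (rowProj g M) = ∑ i, D.s i ^ 2 * qv g (D.v i) := by
  conv_lhs => rw [show M = ∑ i, Matrix.of fun a b => D.s i * D.u i a * D.v i b from D.decomp]
  rw [rowProj_sumMat, frobSq_sumMat _ _ _ (hu_dot D)]
  exact Finset.sum_congr rfl fun i _ => by rw [projv_dot_self hg]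

lemma frobSq_sub_rowProj_svd {ι : Type*} [Fintype ι] [DecidableEq ι] (D : SVDOf M) {g : ι → Fin n → ℝ}
    (hg : ONF g) :
    frobSq (M - rowProj g M) = ∑ i, D.s i ^ 2 * (1 - qv g (D.v i)) := by
  have h1 : M - rowProj g M
      = ∑ i, Matrix.of fun a b => D.s i * D.u i a * (D.v i b - projv g (D.v i) b) := by
    conv_lhs => rw [show M = ∑ i, Matrix.of fun a b => D.s i * D.u i a * D.v i b
      from D.decomp]
    rw [rowProj_sumMat]
    ext a b
    simp only [Matrix.sub_apply, Matrix.sum_apply, Matrix.of_apply,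
      ← Finset.sum_sub_distrib]
    exact Finset.sum_congr rfl fun i _ => by ring
  rw [h1, frobSq_sumMat _ _ _ (hu_dot D)]
  refine Finset.sum_congr rfl fun i _ => ?_
  have h2 : dot (fun b => D.v i b - projv g (D.v i) b) (fun b => D.v i b - projv g (D.v i) b)
      = dot (D.v i) (D.v i) - 2 * dot (D.v i) (projv g (D.v i))
        + dot (projv g (D.v i)) (projv g (D.v i)) := dot_sub_sub _ _
  rw [h2, dot_v_self D i, dot_projv g, projv_dot_self hg]
  ring

/-- the key q bounds -/
lemma q_bounds {ι : Type*} [Fintype ι] [DecidableEq ι] (D : SVDOf M) {g : ι → Fin n → ℝ}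
    (hg : ONF g) {r : ℕ} (hcard : Fintype.card ι ≤ r) :
    (∀ i, qv g (D.v i) ≤ 1) ∧ (∑ i, qv g (D.v i) ≤ (r : ℝ)) := by
  constructor
  · intro i
    have h := bessel hg (D.v i)
    rw [dot_v_self D i] at h
    exact h
  · have swap : ∑ i, qv g (D.v i) = ∑ j : ι, qv D.v (g j) := by
      simp only [qv]
      rw [Finset.sum_comm]
      exact Finset.sum_congr rfl fun j _ => Finset.sum_congr rfl fun i _ => by rw [dot_comm]
    rw [swap]
    have hb : ∀ j : ι, qv D.v (g j) ≤ 1 := fun j => by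
      have h := bessel (onf_v D) (g j)
      have h2 : dot (g j) (g j) = 1 := by
        have := hg j j
        simp only [if_pos rfl] at this
        exact this
      rw [h2] at h
      exact h
    calc ∑ j : ι, qv D.v (g j) ≤ ∑ _j : ι, (1:ℝ) := Finset.sum_le_sum fun j _ => hb j
      _ = (Fintype.card ι : ℝ) := by simp
      _ ≤ (r : ℝ) := by exact_mod_cast hcard

lemma s_sq_anti (D : SVDOf M) : ∀ i j : Fin (min m n), i ≤ j → D.s j ^ 2 ≤ D.s i ^ 2 :=
  fun i j hij => pow_le_pow_left₀ (D.s_nonneg j) (D.s_anti i j hij) 2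

/-- rank-constrained projection bound: ‖M Q‖² ≤ ‖Π_r(M)‖² -/
lemma frobSq_rowProj_le_trunc {ι : Type*} [Fintype ι] [DecidableEq ι] (D : SVDOf M) {g : ι → Fin n → ℝ}
    (hg : ONF g) {r : ℕ} (hcard : Fintype.card ι ≤ r) :
    frobSq (rowProj g M) ≤ frobSq (D.trunc r) := by
  obtain ⟨hq1, hqs⟩ := q_bounds D hg hcard
  have hrr := rearrange (fun i => D.s i ^ 2) (fun i => qv g (D.v i))
    (s_sq_anti D) (fun i => sq_nonneg _) (fun i => qv_nonneg _ _) hq1 hqs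
  rw [frobSq_rowProj_svd D hg, frobSq_trunc D r]
  exact hrr

/-- Eckart–Young, Frobenius version -/
lemma eckart_young {ι : Type*} [Fintype ι] [DecidableEq ι] (D : SVDOf M) {g : ι → Fin n → ℝ}
    (hg : ONF g) {k : ℕ} (hcard : Fintype.card ι ≤ k)
    (B : Matrix (Fin m) (Fin n) ℝ) (hB : rowProj g B = B) :
    frobSq (M - D.trunc k) ≤ frobSq (M - B) := by
  obtain ⟨hq1, hqs⟩ := q_bounds D hg hcard
  have hrr := rearrange (fun i => D.s i ^ 2) (fun i => qv g (D.v i))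
    (s_sq_anti D) (fun i => sq_nonneg _) (fun i => qv_nonneg _ _) hq1 hqs
  have hsplit := Finset.sum_filter_add_sum_filter_not (univ : Finset (Fin (min m n)))
    (fun i => (i : ℕ) < k) (fun i => D.s i ^ 2)
  calc frobSq (M - D.trunc k)
      = ∑ i ∈ Finset.univ.filter (fun i : Fin (min m n) => ¬ (i : ℕ) < k), D.s i ^ 2 :=
        frobSq_tail D k
    _ ≤ ∑ i, D.s i ^ 2 * (1 - qv g (D.v i)) := by
        have expand : ∑ i, D.s i ^ 2 * (1 - qv g (D.v i))
            = (∑ i, D.s i ^ 2) - ∑ i, D.s i ^ 2 * qv g (D.v i) := by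
          rw [← Finset.sum_sub_distrib]
          exact Finset.sum_congr rfl fun i _ => by ring
        rw [expand]
        linarith [hrr, hsplit]
    _ = frobSq (M - rowProj g M) := (frobSq_sub_rowProj_svd D hg).symm
    _ = frobSq ((M - B) - rowProj g (M - B)) := by
        rw [rowProj_sub, hB]
        congr 1
        abel
    _ ≤ frobSq (M - B) := frobSq_sub_rowProj_le hg _

/-- moving a row projection across the Frobenius inner product -/
lemma frobInner_rowProj_swap {ι : Type*} [Fintype ι] (g : ι → Fin n → ℝ)
    (X Y : Matrix (Fin m) (Fin n) ℝ) :
    frobInner X (rowProj g Y) = frobInner (rowProj g X) Y := by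
  simp only [frobInner, rowProj, Matrix.of_apply, projv]
  refine Finset.sum_congr rfl fun a _ => ?_
  have hL : ∑ b, X a b * (∑ j, dot (g j) (fun c => Y a c) * g j b)
      = ∑ j, dot (g j) (fun c => X a c) * dot (g j) (fun c => Y a c) := by
    simp only [Finset.mul_sum]
    rw [Finset.sum_comm]
    refine Finset.sum_congr rfl fun j _ => ?_
    have h : ∀ b, X a b * (dot (g j) (fun c => Y a c) * g j b)
        = dot (g j) (fun c => Y a c) * (g j b * X a b) := fun b => by ring
    rw [Finset.sum_congr rfl fun b _ => h b, ← Finset.mul_sum]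
    have h2 : (∑ b, g j b * X a b) = dot (g j) (fun c => X a c) := rfl
    rw [h2]; ring
  have hR : ∑ b, (∑ j, dot (g j) (fun c => X a c) * g j b) * Y a b
      = ∑ j, dot (g j) (fun c => X a c) * dot (g j) (fun c => Y a c) := by
    simp only [Finset.sum_mul]
    rw [Finset.sum_comm]
    refine Finset.sum_congr rfl fun j _ => ?_
    have h : ∀ b, (dot (g j) (fun c => X a c) * g j b) * Y a b
        = dot (g j) (fun c => X a c) * (g j b * Y a b) := fun b => by ring
    rw [Finset.sum_congr rfl fun b _ => h b, ← Finset.mul_sum]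
    have h2 : (∑ b, g j b * Y a b) = dot (g j) (fun c => Y a c) := rfl
    rw [h2]
  rw [hL, hR]

/-- a truncation is fixed by rowProj if the projection fixes its right singular vectors -/
lemma rowProj_trunc_fix {ι : Type*} [Fintype ι] (D : SVDOf M) (k : ℕ)
    (g : ι → Fin n → ℝ)
    (hfix : ∀ j ∈ Finset.univ.filter (fun j : Fin (min m n) => (j : ℕ) < k),
      projv g (D.v j) = D.v j) :
    rowProj g (D.trunc k) = D.trunc k := by
  rw [SVDOf.trunc, rowProj_sumMat]
  refine Finset.sum_congr rfl fun j hj => ?_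
  ext a b
  simp only [Matrix.of_apply]
  rw [hfix j hj]

end SVDSpecific

section Euclid

lemma euclid_inner {n : ℕ} (x y : EuclideanSpace ℝ (Fin n)) :
    (inner ℝ x y : ℝ) = dot x y := by
  simp [PiLp.inner_apply, RCLike.inner_apply, dot, mul_comm]

end Euclid

end Stmt3Aux

set_option maxHeartbeats 2000000 in
open Stmt3Aux in
/-- `‖Π_k(H+Z) − H‖_F ≤ 2‖Π_{2k}(Z)‖_F + 3‖H − Π_k(H)‖_F`. -/
theorem stmt3 {m n : ℕ} (H Z : Matrix (Fin m) (Fin n) ℝ) (k : ℕ) (hk : k ≤ min m n)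
    (DH : SVDOf H) (DZ : SVDOf Z) (DHhat : SVDOf (H + Z)) :
    frobNorm (DHhat.trunc k - H) ≤
      2 * frobNorm (DZ.trunc (2 * k)) + 3 * frobNorm (H - DH.trunc k) := by
  classical
  -- ===== Step I : Eckart–Young with competitor B = Π_k(H) =====
  set A := DHhat.trunc k with hAdef
  set Bm := DH.trunc k with hBdef
  let ι₁ := {j : Fin (min m n) // (j : ℕ) < k}
  let g1 : ι₁ → Fin n → ℝ := fun j => DH.v j.1
  have hg1 : ONF g1 := by
    intro i j
    have h : dot (g1 i) (g1 j) = if i.1 = j.1 then (1:ℝ) else 0 := DH.v_orth i.1 j.1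
    rw [h]
    by_cases hij : i = j
    · subst hij; simp
    · rw [if_neg (fun h' => hij (Subtype.ext h')), if_neg hij]
  have hcard1 : Fintype.card ι₁ ≤ k := by
    have hinj : Function.Injective (fun i : ι₁ => (⟨(i.1 : ℕ), i.2⟩ : Fin k)) := by
      intro a b hab
      exact Subtype.ext (Fin.ext (by simpa using congrArg Fin.val hab))
    calc Fintype.card ι₁ ≤ Fintype.card (Fin k) := Fintype.card_le_of_injective _ hinj
      _ = k := Fintype.card_fin k
  have hfixB : rowProj g1 Bm = Bm := by
    refine rowProj_trunc_fix DH k g1 fun j hj => ?_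
    have hjlt : (j : ℕ) < k := (Finset.mem_filter.mp hj).2
    funext b
    show (∑ i : ι₁, dot (g1 i) (DH.v j) * g1 i b) = DH.v j b
    rw [Finset.sum_eq_single (⟨j, hjlt⟩ : ι₁)]
    · have h1 : dot (g1 (⟨j, hjlt⟩ : ι₁)) (DH.v j) = 1 := dot_v_self DH j
      rw [h1, one_mul]
    · intro i _ hne
      have h0 : dot (g1 i) (DH.v j) = if i.1 = j then (1:ℝ) else 0 := DH.v_orth i.1 j
      have hne' : i.1 ≠ j := fun h' => hne (Subtype.ext h')
      rw [h0, if_neg hne', zero_mul]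
    · intro habs; exact absurd (Finset.mem_univ _) habs
  have EYres : frobSq ((H + Z) - A) ≤ frobSq ((H + Z) - Bm) :=
    eckart_young DHhat hg1 hcard1 Bm hfixB
  -- ===== Step II : orthonormal basis of span of the 2k right singular vectors =====
  set E := EuclideanSpace ℝ (Fin n) with hEdef
  set Fk := (Finset.univ.filter (fun j : Fin (min m n) => (j : ℕ) < k)) with hFk
  set T : Finset E := Fk.image (fun j => (WithLp.toLp 2 (DHhat.v j) : E)) ∪ Fk.image (fun j => (WithLp.toLp 2 (DH.v j) : E))
    with hT
  set S : Submodule ℝ E := Submodule.span ℝ (T : Set E) with hS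
  have hcardFk : Fk.card ≤ k := by
    rw [hFk]
    have h := Finset.card_le_card_of_injOn
      (s := Finset.univ.filter (fun j : Fin (min m n) => (j : ℕ) < k))
      (t := Finset.range k)
      (fun j : Fin (min m n) => (j : ℕ))
      (fun j hj => Finset.mem_range.mpr (Finset.mem_filter.mp hj).2)
      (fun a _ b _ hab => Fin.ext hab)
    simpa using h
  have hrS : Module.finrank ℝ S ≤ 2 * k := by
    have h1 : Module.finrank ℝ S ≤ T.card := finrank_span_finset_le_card T
    have h2 : T.card ≤ k + k := by
      rw [hT]
      refine le_trans (Finset.card_union_le _ _) ?_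
      exact Nat.add_le_add (le_trans Finset.card_image_le hcardFk)
        (le_trans Finset.card_image_le hcardFk)
    omega
  let bS := stdOrthonormalBasis ℝ S
  let g2 : Fin (Module.finrank ℝ S) → Fin n → ℝ := fun i => ((bS i : E) : Fin n → ℝ)
  have hg2 : ONF g2 := by
    intro i j
    have horth := bS.orthonormal
    rw [orthonormal_iff_ite] at horth
    have h := horth i j
    have hco : (inner ℝ (bS i) (bS j) : ℝ) = (inner ℝ ((bS i : E)) ((bS j : E)) : ℝ) :=
      Submodule.coe_inner S (bS i) (bS j)
    rw [hco, euclid_inner] at h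
    exact h
  have hcard2 : Fintype.card (Fin (Module.finrank ℝ S)) ≤ 2 * k := by
    simpa using hrS
  have hfix2 : ∀ x : E, x ∈ S → ∀ bb : Fin n, projv g2 x bb = x bb := by
    intro x hx bb
    have hsum := bS.sum_repr ⟨x, hx⟩
    have hval : (∑ i, bS.repr ⟨x, hx⟩ i • (bS i : E)) = x := by
      have h := congrArg (Subtype.val) hsum
      simpa using h
    have happ := congrArg (EuclideanSpace.proj (𝕜 := ℝ) bb) hval
    simp only [map_sum, _root_.map_smul, PiLp.proj_apply, smul_eq_mul] at happ
    have hrepr : ∀ i, bS.repr ⟨x, hx⟩ i = dot (g2 i) x := by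
      intro i
      rw [bS.repr_apply_apply]
      have hco : (inner ℝ (bS i) (⟨x, hx⟩ : S) : ℝ) = (inner ℝ ((bS i : E)) x : ℝ) :=
        Submodule.coe_inner S (bS i) ⟨x, hx⟩
      rw [hco, euclid_inner]
    have hfinal : projv g2 x bb = ∑ i, bS.repr ⟨x, hx⟩ i * ((bS i : E) bb) := by
      simp only [projv]
      exact Finset.sum_congr rfl fun i _ => by rw [hrepr i]
    exact hfinal.trans happ
  have hmemhat : ∀ j ∈ Fk, ((WithLp.toLp 2 (DHhat.v j) : E)) ∈ S := by
    intro j hj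
    refine Submodule.subset_span ?_
    exact Finset.mem_coe.mpr (Finset.mem_union_left _ (Finset.mem_image_of_mem _ hj))
  have hmemH : ∀ j ∈ Fk, ((WithLp.toLp 2 (DH.v j) : E)) ∈ S := by
    intro j hj
    refine Submodule.subset_span ?_
    exact Finset.mem_coe.mpr (Finset.mem_union_right _ (Finset.mem_image_of_mem _ hj))
  have hfixA : rowProj g2 A = A := by
    refine rowProj_trunc_fix DHhat k g2 fun j hj => ?_
    funext bb
    exact hfix2 (WithLp.toLp 2 (DHhat.v j) : E) (hmemhat j hj) bb
  have hfixBm : rowProj g2 Bm = Bm := by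
    refine rowProj_trunc_fix DH k g2 fun j hj => ?_
    funext bb
    exact hfix2 (WithLp.toLp 2 (DH.v j) : E) (hmemH j hj) bb
  have hfixAB : rowProj g2 (A - Bm) = A - Bm := by
    rw [rowProj_sub, hfixA, hfixBm]
  have hZproj : frobSq (rowProj g2 Z) ≤ frobSq (DZ.trunc (2 * k)) :=
    frobSq_rowProj_le_trunc DZ hg2 hcard2
  -- ===== Step III : assembling the inequality =====
  have e1 : frobSq (A - H) = frobSq (A - (H + Z)) + 2 * frobInner (A - (H + Z)) Z
      + frobSq Z := by
    have h : A - H = (A - (H + Z)) + Z := by abel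
    rw [h, frobSq_add_expand]
  have e2 : frobSq (A - (H + Z)) ≤ frobSq ((H + Z) - Bm) := by
    rw [frobSq_neg_sub]; exact EYres
  have e3 : frobSq ((H + Z) - Bm) = frobSq (H - Bm) + 2 * frobInner (H - Bm) Z
      + frobSq Z := by
    have h : (H + Z) - Bm = (H - Bm) + Z := by abel
    rw [h, frobSq_add_expand]
  have e4 : frobInner (A - (H + Z)) Z + frobInner (H - Bm) Z + frobInner Z Z
      = frobInner (A - Bm) Z := by
    rw [← frobInner_add_left, ← frobInner_add_left]
    congr 1
    abel
  have e4' : frobInner Z Z = frobSq Z := frobInner_self Z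
  have key : frobSq (A - H) ≤ frobSq (H - Bm) + 2 * frobInner (A - Bm) Z := by
    linarith
  have e5 : frobInner (A - Bm) Z = frobInner (A - Bm) (rowProj g2 Z) := by
    have h := frobInner_rowProj_swap g2 (A - Bm) Z
    rw [hfixAB] at h
    exact h.symm
  have e6 : frobInner (A - Bm) (rowProj g2 Z)
      ≤ frobNorm (A - Bm) * frobNorm (rowProj g2 Z) := frobInner_le _ _
  have e7 : frobNorm (rowProj g2 Z) ≤ frobNorm (DZ.trunc (2 * k)) :=
    frobNorm_le_of_frobSq_le hZproj
  have e8 : frobNorm (A - Bm) ≤ frobNorm (A - H) + frobNorm (H - Bm) := by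
    have h : A - Bm = (A - H) + (H - Bm) := by abel
    rw [h]; exact frobNorm_triangle _ _
  have hxn := frobNorm_nonneg (A - H)
  have hrn := frobNorm_nonneg (H - Bm)
  have hzn := frobNorm_nonneg (DZ.trunc (2 * k))
  have hpn := frobNorm_nonneg (rowProj g2 Z)
  have e9 : frobInner (A - Bm) Z
      ≤ (frobNorm (A - H) + frobNorm (H - Bm)) * frobNorm (DZ.trunc (2 * k)) := by
    rw [e5]
    calc frobInner (A - Bm) (rowProj g2 Z)
        ≤ frobNorm (A - Bm) * frobNorm (rowProj g2 Z) := e6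
      _ ≤ (frobNorm (A - H) + frobNorm (H - Bm)) * frobNorm (DZ.trunc (2 * k)) :=
          mul_le_mul e8 e7 hpn (add_nonneg hxn hrn)
  have e10 : frobNorm (A - H) ^ 2 ≤ frobNorm (H - Bm) ^ 2
      + 2 * ((frobNorm (A - H) + frobNorm (H - Bm)) * frobNorm (DZ.trunc (2 * k))) := by
    rw [frobNorm_sq, frobNorm_sq]
    linarith
  nlinarith [e10, hxn, hrn, hzn, mul_nonneg hxn hrn, mul_nonneg hrn hzn,
    mul_nonneg hxn hzn, sq_nonneg (frobNorm (A - H) - frobNorm (H - Bm)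
      - 2 * frobNorm (DZ.trunc (2 * k)))]
end

section
/- Let H, Z be real m×n matrices with rank(H) = n₀, set Ĥ = H + Z. Then for every k = 0, …, n₀: ‖Π_k(Ĥ) − H‖_F² ≤ 18 ( k‖Z‖₂² + Σ_{i=k+1}^{n₀} s_i(H)² ). -/
open Matrix Finset

attribute [local instance] Classical.propDecidable

namespace Stmt4A

noncomputable def pn {ι : Type*} [Fintype ι] (x : ι → ℝ) : ℝ := Real.sqrt (∑ a, x a ^ 2)

lemma sumsq_nonneg {ι : Type*} [Fintype ι] (x : ι → ℝ) : 0 ≤ ∑ a, x a ^ 2 :=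
  Finset.sum_nonneg fun a _ => sq_nonneg _

lemma pn_nonneg {ι : Type*} [Fintype ι] (x : ι → ℝ) : 0 ≤ pn x := Real.sqrt_nonneg _

lemma pn_sq {ι : Type*} [Fintype ι] (x : ι → ℝ) : pn x ^ 2 = ∑ a, x a ^ 2 :=
  Real.sq_sqrt (sumsq_nonneg x)

lemma pn_mono {ι : Type*} [Fintype ι] {x y : ι → ℝ} (h : ∑ a, x a ^ 2 ≤ ∑ a, y a ^ 2) :
    pn x ≤ pn y := Real.sqrt_le_sqrt h

lemma pn_le_of_sq_le {ι : Type*} [Fintype ι] {x : ι → ℝ} {c : ℝ} (hc : 0 ≤ c)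
    (h : ∑ a, x a ^ 2 ≤ c ^ 2) : pn x ≤ c := by
  calc pn x ≤ Real.sqrt (c ^ 2) := Real.sqrt_le_sqrt h
    _ = c := Real.sqrt_sq hc

lemma sq_le_of_pn_le {ι : Type*} [Fintype ι] {x : ι → ℝ} {c : ℝ} (h : pn x ≤ c) :
    ∑ a, x a ^ 2 ≤ c ^ 2 := by
  rw [← pn_sq x]
  have := pn_nonneg x
  nlinarith

lemma cs {ι : Type*} [Fintype ι] (x y : ι → ℝ) : ∑ a, x a * y a ≤ pn x * pn y := by
  have h : (∑ a, x a * y a) ^ 2 ≤ (∑ a, x a ^ 2) * (∑ a, y a ^ 2) :=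
    sum_mul_sq_le_sq_mul_sq Finset.univ x y
  calc ∑ a, x a * y a ≤ |∑ a, x a * y a| := le_abs_self _
    _ = Real.sqrt ((∑ a, x a * y a) ^ 2) := (Real.sqrt_sq_eq_abs _).symm
    _ ≤ Real.sqrt ((∑ a, x a ^ 2) * (∑ a, y a ^ 2)) := Real.sqrt_le_sqrt h
    _ = pn x * pn y := by rw [Real.sqrt_mul (sumsq_nonneg x)]; rfl

lemma pn_add {ι : Type*} [Fintype ι] (x y : ι → ℝ) :
    pn (fun a => x a + y a) ≤ pn x + pn y := by
  have hcs := cs x y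
  have e : ∑ a, (x a + y a) ^ 2
      = (∑ a, x a ^ 2) + 2 * (∑ a, x a * y a) + ∑ a, y a ^ 2 := by
    rw [Finset.mul_sum, ← Finset.sum_add_distrib, ← Finset.sum_add_distrib]
    exact Finset.sum_congr rfl fun a _ => by ring
  have h1 : ∑ a, (x a + y a) ^ 2 ≤ (pn x + pn y) ^ 2 := by
    rw [e]
    nlinarith [pn_sq x, pn_sq y, pn_nonneg x, pn_nonneg y]
  exact pn_le_of_sq_le (add_nonneg (pn_nonneg x) (pn_nonneg y)) h1

lemma pn_sub {ι : Type*} [Fintype ι] (x y : ι → ℝ) :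
    pn (fun a => x a - y a) ≤ pn x + pn y := by
  have e : pn (fun a => - y a) = pn y := by
    unfold pn; congr 1; exact Finset.sum_congr rfl fun a _ => by ring
  have h := pn_add x (fun a => - y a)
  rw [e] at h
  have e2 : (fun a => x a - y a) = (fun a => x a + - y a) := funext fun a => by ring
  rw [e2]; exact h

section Ortho

variable {ι κ : Type*} [Fintype ι] [Fintype κ] {u : ι → κ → ℝ}

lemma ortho_expand (hu1 : ∀ i, (∑ a, u i a * u i a) = 1)
    (hu2 : ∀ i j, i ≠ j → (∑ a, u i a * u j a) = 0)
    (t : Finset ι) (c : ι → ℝ) :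
    ∑ a, (∑ i ∈ t, c i * u i a) ^ 2 = ∑ i ∈ t, c i ^ 2 := by
  calc ∑ a, (∑ i ∈ t, c i * u i a) ^ 2
      = ∑ a, ∑ i ∈ t, ∑ j ∈ t, (c i * c j) * (u i a * u j a) := by
        refine Finset.sum_congr rfl fun a _ => ?_
        rw [sq, Finset.sum_mul_sum]
        exact Finset.sum_congr rfl fun i _ => Finset.sum_congr rfl fun j _ => by ring
    _ = ∑ i ∈ t, ∑ j ∈ t, (c i * c j) * ∑ a, u i a * u j a := by
        rw [Finset.sum_comm]
        refine Finset.sum_congr rfl fun i _ => ?_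
        rw [Finset.sum_comm]
        exact Finset.sum_congr rfl fun j _ => (Finset.mul_sum _ _ _).symm
    _ = ∑ i ∈ t, c i ^ 2 := by
        refine Finset.sum_congr rfl fun i hi => ?_
        rw [Finset.sum_eq_single_of_mem i hi
          (fun j hj hne => by rw [hu2 i j (Ne.symm hne), mul_zero])]
        rw [hu1 i]; ring

lemma bessel_eq (hu1 : ∀ i, (∑ a, u i a * u i a) = 1)
    (hu2 : ∀ i j, i ≠ j → (∑ a, u i a * u j a) = 0)
    (t : Finset ι) (y : κ → ℝ) :
    ∑ a, (y a - ∑ i ∈ t, (∑ b, u i b * y b) * u i a) ^ 2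
      = (∑ a, y a ^ 2) - ∑ i ∈ t, (∑ b, u i b * y b) ^ 2 := by
  set c : ι → ℝ := fun i => ∑ b, u i b * y b with hc
  have e1 : ∑ a, (y a - ∑ i ∈ t, c i * u i a) ^ 2
      = (∑ a, y a ^ 2) - 2 * (∑ a, y a * ∑ i ∈ t, c i * u i a)
        + ∑ a, (∑ i ∈ t, c i * u i a) ^ 2 := by
    rw [Finset.mul_sum, ← Finset.sum_sub_distrib, ← Finset.sum_add_distrib]
    exact Finset.sum_congr rfl fun a _ => by ring
  have e2 : ∑ a, y a * ∑ i ∈ t, c i * u i a = ∑ i ∈ t, c i ^ 2 := by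
    calc ∑ a, y a * ∑ i ∈ t, c i * u i a
        = ∑ a, ∑ i ∈ t, c i * (u i a * y a) := by
          refine Finset.sum_congr rfl fun a _ => ?_
          rw [Finset.mul_sum]
          exact Finset.sum_congr rfl fun i _ => by ring
      _ = ∑ i ∈ t, c i * ∑ a, u i a * y a := by
          rw [Finset.sum_comm]
          exact Finset.sum_congr rfl fun i _ => (Finset.mul_sum _ _ _).symm
      _ = ∑ i ∈ t, c i ^ 2 := Finset.sum_congr rfl fun i _ => by
            have : ∑ a, u i a * y a = c i := rfl
            rw [this]; ring
  rw [e1, e2, ortho_expand hu1 hu2 t c]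
  ring

lemma bessel (hu1 : ∀ i, (∑ a, u i a * u i a) = 1)
    (hu2 : ∀ i j, i ≠ j → (∑ a, u i a * u j a) = 0)
    (t : Finset ι) (y : κ → ℝ) :
    ∑ i ∈ t, (∑ b, u i b * y b) ^ 2 ≤ ∑ a, y a ^ 2 := by
  have h := bessel_eq hu1 hu2 t y
  have h0 := sumsq_nonneg (fun a => y a - ∑ i ∈ t, (∑ b, u i b * y b) * u i a)
  rw [h] at h0
  linarith

lemma q_contract (hu1 : ∀ i, (∑ a, u i a * u i a) = 1)
    (hu2 : ∀ i j, i ≠ j → (∑ a, u i a * u j a) = 0)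
    (t : Finset ι) (y : κ → ℝ) :
    ∑ a, (y a - ∑ i ∈ t, (∑ b, u i b * y b) * u i a) ^ 2 ≤ ∑ a, y a ^ 2 := by
  rw [bessel_eq hu1 hu2 t y]
  have : 0 ≤ ∑ i ∈ t, (∑ b, u i b * y b) ^ 2 :=
    Finset.sum_nonneg fun i _ => sq_nonneg _
  linarith

end Ortho

section Spec

variable {m n : ℕ} (Z : Matrix (Fin m) (Fin n) ℝ)

lemma spec_bdd : BddAbove (Set.range fun x : {x : Fin n → ℝ // ∑ a, x a ^ 2 ≤ 1} =>
    Real.sqrt (∑ a, (Z.mulVec x.1) a ^ 2)) := by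
  refine ⟨Real.sqrt (∑ a, ∑ b, Z a b ^ 2), ?_⟩
  rintro r ⟨x, rfl⟩
  apply Real.sqrt_le_sqrt
  refine Finset.sum_le_sum fun a _ => ?_
  have h1 : (Z.mulVec x.1 a) ^ 2 ≤ (∑ b, Z a b ^ 2) * (∑ b, x.1 b ^ 2) := by
    have h := sum_mul_sq_le_sq_mul_sq Finset.univ (fun b => Z a b) x.1
    simpa [Matrix.mulVec, dotProduct] using h
  calc (Z.mulVec x.1 a) ^ 2 ≤ (∑ b, Z a b ^ 2) * (∑ b, x.1 b ^ 2) := h1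
    _ ≤ (∑ b, Z a b ^ 2) * 1 := by
        exact mul_le_mul_of_nonneg_left x.2 (sumsq_nonneg _)
    _ = ∑ b, Z a b ^ 2 := mul_one _

lemma spec_nonneg : 0 ≤ specNorm Z :=
  Real.iSup_nonneg fun _ => Real.sqrt_nonneg _

lemma le_spec (x : Fin n → ℝ) (hx : ∑ a, x a ^ 2 ≤ 1) : pn (Z.mulVec x) ≤ specNorm Z :=
  le_ciSup (spec_bdd Z) (⟨x, hx⟩ : {x : Fin n → ℝ // ∑ a, x a ^ 2 ≤ 1})

lemma sq_mulVec_le (x : Fin n → ℝ) (hx : ∑ a, x a ^ 2 ≤ 1) :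
    ∑ a, (Z.mulVec x) a ^ 2 ≤ specNorm Z ^ 2 :=
  sq_le_of_pn_le (le_spec Z x hx)

lemma pn_smul {ι : Type*} [Fintype ι] (r : ℝ) (x : ι → ℝ) :
    pn (fun a => r * x a) = |r| * pn x := by
  unfold pn
  rw [show ∑ a, (r * x a) ^ 2 = r ^ 2 * ∑ a, x a ^ 2 by
    rw [Finset.mul_sum]; exact Finset.sum_congr rfl fun a _ => by ring]
  rw [Real.sqrt_mul (sq_nonneg r), Real.sqrt_sq_eq_abs]

lemma pn_mulVec_le (x : Fin n → ℝ) : pn (Z.mulVec x) ≤ specNorm Z * pn x := by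
  by_cases hx : pn x = 0
  · have hsum : ∑ b, x b ^ 2 = 0 := by rw [← pn_sq, hx]; ring
    have hx0 : x = 0 := by
      funext b
      have := (Finset.sum_eq_zero_iff_of_nonneg (fun b _ => sq_nonneg (x b))).mp hsum b
        (Finset.mem_univ b)
      exact pow_eq_zero_iff (n := 2) (by norm_num) |>.mp this
    subst hx0
    have h0 : pn (0 : Fin n → ℝ) = 0 := by unfold pn; simp
    have h0' : pn (0 : Fin m → ℝ) = 0 := by unfold pn; simp
    rw [Matrix.mulVec_zero, h0, h0', mul_zero]
  · have hρ : 0 < pn x := lt_of_le_of_ne (pn_nonneg x) (Ne.symm hx)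
    set ρ := pn x with hρdef
    set x' : Fin n → ℝ := fun b => ρ⁻¹ * x b with hx'
    have hx'1 : ∑ b, x' b ^ 2 ≤ 1 := by
      have : ∑ b, x' b ^ 2 = ρ⁻¹ ^ 2 * ∑ b, x b ^ 2 := by
        rw [Finset.mul_sum]; exact Finset.sum_congr rfl fun b _ => by simp [hx']; ring
      rw [this, ← pn_sq x, ← hρdef]
      rw [show ρ⁻¹ ^ 2 * ρ ^ 2 = 1 by field_simp]
    have h2 := le_spec Z x' hx'1
    have h3 : Z.mulVec x = fun a => ρ * (Z.mulVec x') a := by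
      funext a
      simp only [Matrix.mulVec, dotProduct, hx', Finset.mul_sum]
      exact Finset.sum_congr rfl fun b _ => by field_simp
    rw [h3, pn_smul, abs_of_pos hρ, mul_comm]
    exact mul_le_mul_of_nonneg_right h2 (le_of_lt hρ)

lemma col_bound (uu : Fin m → ℝ) (hu1 : ∑ a, uu a ^ 2 ≤ 1) :
    ∑ b, (∑ a, Z a b * uu a) ^ 2 ≤ specNorm Z ^ 2 := by
  set w : Fin n → ℝ := fun b => ∑ a, Z a b * uu a with hw
  have hpnu : pn uu ≤ 1 := pn_le_of_sq_le zero_le_one (by simpa using hu1)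
  have e : ∑ b, w b ^ 2 = ∑ a, uu a * (Z.mulVec w) a := by
    calc ∑ b, w b ^ 2 = ∑ b, ∑ a, (Z a b * w b) * uu a := by
          refine Finset.sum_congr rfl fun b _ => ?_
          rw [sq]
          nth_rewrite 2 [hw]
          rw [Finset.mul_sum]
          exact Finset.sum_congr rfl fun a _ => by ring
      _ = ∑ a, uu a * (Z.mulVec w) a := by
          rw [Finset.sum_comm]
          refine Finset.sum_congr rfl fun a _ => ?_
          simp only [Matrix.mulVec, dotProduct, Finset.mul_sum]
          exact Finset.sum_congr rfl fun b _ => by ring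
  have key : ∑ b, w b ^ 2 ≤ specNorm Z * pn w := by
    rw [e]
    calc ∑ a, uu a * (Z.mulVec w) a ≤ pn uu * pn (Z.mulVec w) := cs _ _
      _ ≤ 1 * (specNorm Z * pn w) := by
          refine mul_le_mul hpnu (pn_mulVec_le Z w) (pn_nonneg _) zero_le_one
      _ = specNorm Z * pn w := one_mul _
  have hw2 : pn w ^ 2 ≤ specNorm Z * pn w := by rw [pn_sq]; exact key
  have hpnw : pn w ≤ specNorm Z := by
    rcases eq_or_lt_of_le (pn_nonneg w) with h0 | h0
    · rw [← h0]; exact spec_nonneg Z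
    · nlinarith
  calc ∑ b, w b ^ 2 = pn w ^ 2 := (pn_sq w).symm
    _ ≤ specNorm Z ^ 2 := by nlinarith [pn_nonneg w, spec_nonneg Z]

end Spec


section SVD

variable {m n : ℕ} {M : Matrix (Fin m) (Fin n) ℝ}

lemma u_orth1 (D : SVDOf M) : ∀ i, (∑ a, D.u i a * D.u i a) = 1 :=
  fun i => by simpa using D.u_orth i i

lemma u_orth2 (D : SVDOf M) : ∀ i j, i ≠ j → (∑ a, D.u i a * D.u j a) = 0 :=
  fun i j h => by simpa [h] using D.u_orth i j

lemma v_orth1 (D : SVDOf M) : ∀ i, (∑ a, D.v i a * D.v i a) = 1 :=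
  fun i => by simpa using D.v_orth i i

lemma v_orth2 (D : SVDOf M) : ∀ i j, i ≠ j → (∑ a, D.v i a * D.v j a) = 0 :=
  fun i j h => by simpa [h] using D.v_orth i j

lemma svd_entry (D : SVDOf M) (a : Fin m) (b : Fin n) :
    M a b = ∑ p, D.s p * D.u p a * D.v p b := by
  conv_lhs => rw [D.decomp]
  simp [Matrix.sum_apply]

lemma svd_mulVec (D : SVDOf M) (y : Fin n → ℝ) :
    M.mulVec y = fun a => ∑ p, (D.s p * ∑ b, D.v p b * y b) * D.u p a := by
  funext a
  simp only [Matrix.mulVec, dotProduct]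
  calc ∑ b, M a b * y b = ∑ b, ∑ p, (D.s p * D.u p a) * (D.v p b * y b) := by
        refine Finset.sum_congr rfl fun b _ => ?_
        rw [svd_entry D a b, Finset.sum_mul]
        exact Finset.sum_congr rfl fun p _ => by ring
    _ = ∑ p, (D.s p * ∑ b, D.v p b * y b) * D.u p a := by
        rw [Finset.sum_comm]
        refine Finset.sum_congr rfl fun p _ => ?_
        rw [Finset.mul_sum, Finset.sum_mul]
        exact Finset.sum_congr rfl fun b _ => by ring

lemma svd_mulVec_normsq (D : SVDOf M) (y : Fin n → ℝ) :
    ∑ a, (M.mulVec y) a ^ 2 = ∑ p, (D.s p * ∑ b, D.v p b * y b) ^ 2 := by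
  rw [svd_mulVec D y]
  exact ortho_expand (u_orth1 D) (u_orth2 D) Finset.univ _

lemma svd_mulVec_basis (D : SVDOf M) (p : Fin (min m n)) :
    M.mulVec (D.v p) = fun a => D.s p * D.u p a := by
  rw [svd_mulVec D]
  funext a
  rw [Finset.sum_eq_single_of_mem p (Finset.mem_univ p) (fun q _ hq => by
    rw [v_orth2 D q p hq, mul_zero, zero_mul])]
  rw [v_orth1 D p]
  ring

end SVD

section Weyl

lemma weyl {m n : ℕ} {H Z : Matrix (Fin m) (Fin n) ℝ}
    (DH : SVDOf H) (DD : SVDOf (H + Z)) (j : Fin (min m n)) :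
    DD.s j ≤ DH.s j + specNorm Z := by
  classical
  have hJμ : (j : ℕ) < min m n := j.isLt
  set J := (j : ℕ) with hJ
  set e1 : Fin (J + 1) → Fin (min m n) :=
    fun i => ⟨(i : ℕ), lt_of_le_of_lt (Nat.lt_succ_iff.mp i.isLt) hJμ⟩ with he1
  set e0 : Fin J → Fin (min m n) := fun l => ⟨(l : ℕ), lt_trans l.isLt hJμ⟩ with he0
  have he1inj : Function.Injective e1 := by
    intro a b hab
    have : (a : ℕ) = (b : ℕ) := congrArg (fun z => (z : Fin (min m n)).val) hab
    exact Fin.ext this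
  set d : Matrix (Fin J) (Fin (J + 1)) ℝ :=
    Matrix.of fun l i => ∑ a, DH.v (e0 l) a * DD.v (e1 i) a with hd
  have hninj : ¬ Function.Injective d.mulVecLin := by
    intro hinj
    have h1 := LinearMap.finrank_le_finrank_of_injective hinj
    rw [Module.finrank_fintype_fun_eq_card, Module.finrank_fintype_fun_eq_card] at h1
    simp at h1
  rw [Function.Injective] at hninj
  push_neg at hninj
  obtain ⟨c1, c2, heq, hne⟩ := hninj
  set c0 : Fin (J + 1) → ℝ := c1 - c2 with hc0
  have hc0ne : c0 ≠ 0 := sub_ne_zero.mpr hne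
  have hker : d.mulVec c0 = 0 := by
    have h5 : d.mulVecLin (c1 - c2) = 0 := by rw [map_sub, heq, sub_self]
    simpa [Matrix.mulVecLin_apply] using h5
  have hc0sq : 0 < ∑ i, c0 i ^ 2 := by
    rcases Function.ne_iff.mp hc0ne with ⟨i, hi⟩
    have hpos : 0 < c0 i ^ 2 :=
      (sq_nonneg _).lt_of_ne (Ne.symm (pow_ne_zero 2 hi))
    exact Finset.sum_pos' (fun i _ => sq_nonneg _) ⟨i, Finset.mem_univ i, hpos⟩
  set ρ := Real.sqrt (∑ i, c0 i ^ 2) with hρdef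
  have hρ : 0 < ρ := Real.sqrt_pos.mpr hc0sq
  have hρsq : ρ ^ 2 = ∑ i, c0 i ^ 2 := Real.sq_sqrt (le_of_lt hc0sq)
  set c : Fin (J + 1) → ℝ := fun i => ρ⁻¹ * c0 i with hcdef
  have hcsum : ∑ i, c i ^ 2 = 1 := by
    have e : ∑ i, c i ^ 2 = ρ⁻¹ ^ 2 * ∑ i, c0 i ^ 2 := by
      rw [Finset.mul_sum]
      exact Finset.sum_congr rfl fun i _ => by rw [hcdef]; ring
    rw [e, ← hρsq]
    field_simp
  set x : Fin n → ℝ := fun b => ∑ i, c i * DD.v (e1 i) b with hx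
  have hve1 : ∀ i, (∑ a, DD.v (e1 i) a * DD.v (e1 i) a) = 1 := fun i => v_orth1 DD _
  have hve2 : ∀ i i', i ≠ i' → (∑ a, DD.v (e1 i) a * DD.v (e1 i') a) = 0 :=
    fun i i' h => v_orth2 DD _ _ (fun hh => h (he1inj hh))
  have hxsum : ∑ b, x b ^ 2 = 1 := by
    rw [hx, ortho_expand hve1 hve2 Finset.univ c]
    exact hcsum
  have hinner : ∀ i : Fin (J + 1), (∑ b, DD.v (e1 i) b * x b) = c i := by
    intro i
    calc ∑ b, DD.v (e1 i) b * x b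
        = ∑ b, ∑ i', c i' * (DD.v (e1 i) b * DD.v (e1 i') b) := by
          refine Finset.sum_congr rfl fun b _ => ?_
          rw [hx, Finset.mul_sum]
          exact Finset.sum_congr rfl fun i' _ => by ring
      _ = ∑ i', c i' * ∑ b, DD.v (e1 i) b * DD.v (e1 i') b := by
          rw [Finset.sum_comm]
          exact Finset.sum_congr rfl fun i' _ => (Finset.mul_sum _ _ _).symm
      _ = c i := by
          rw [Finset.sum_eq_single_of_mem i (Finset.mem_univ i) (fun i' _ h => by
            rw [hve2 i i' (Ne.symm h), mul_zero])]
          rw [hve1 i, mul_one]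
  have hlow : DD.s j ^ 2 ≤ ∑ a, ((H + Z).mulVec x) a ^ 2 := by
    rw [svd_mulVec_normsq DD x]
    have himg : ∑ p ∈ Finset.univ.image e1, (DD.s p * ∑ b, DD.v p b * x b) ^ 2
        = ∑ i, (DD.s (e1 i) * c i) ^ 2 := by
      rw [Finset.sum_image (fun a _ b _ h => he1inj h)]
      exact Finset.sum_congr rfl fun i _ => by rw [hinner i]
    have hge : ∀ i : Fin (J + 1), DD.s j ^ 2 * c i ^ 2 ≤ (DD.s (e1 i) * c i) ^ 2 := by
      intro i
      have hle : (e1 i) ≤ j := by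
        rw [Fin.le_def]
        exact Nat.lt_succ_iff.mp i.isLt
      have h1 : DD.s j ≤ DD.s (e1 i) := DD.s_anti _ _ hle
      have h2 : 0 ≤ DD.s j := DD.s_nonneg j
      have h3 : DD.s j ^ 2 ≤ DD.s (e1 i) ^ 2 := by nlinarith
      calc DD.s j ^ 2 * c i ^ 2 ≤ DD.s (e1 i) ^ 2 * c i ^ 2 :=
            mul_le_mul_of_nonneg_right h3 (sq_nonneg _)
        _ = (DD.s (e1 i) * c i) ^ 2 := by ring
    calc DD.s j ^ 2 = ∑ i, DD.s j ^ 2 * c i ^ 2 := by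
          rw [← Finset.mul_sum, hcsum, mul_one]
      _ ≤ ∑ i, (DD.s (e1 i) * c i) ^ 2 := Finset.sum_le_sum fun i _ => hge i
      _ = ∑ p ∈ Finset.univ.image e1, (DD.s p * ∑ b, DD.v p b * x b) ^ 2 := himg.symm
      _ ≤ ∑ p, (DD.s p * ∑ b, DD.v p b * x b) ^ 2 :=
          Finset.sum_le_sum_of_subset_of_nonneg (Finset.subset_univ _)
            fun p _ _ => sq_nonneg _
  have hup : ∑ a, (H.mulVec x) a ^ 2 ≤ DH.s j ^ 2 := by
    rw [svd_mulVec_normsq DH x]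
    have hzero : ∀ p : Fin (min m n), (p : ℕ) < J → (∑ b, DH.v p b * x b) = 0 := by
      intro p hp
      set l : Fin J := ⟨(p : ℕ), hp⟩ with hl
      have hpl : p = e0 l := by rw [he0]
      have hkl : (d.mulVec c0) l = 0 := by rw [hker]; rfl
      have e : ∑ b, DH.v p b * x b = ρ⁻¹ * ((d.mulVec c0) l) := by
        simp only [Matrix.mulVec, dotProduct, hd, Matrix.of_apply]
        calc ∑ b, DH.v p b * x b
            = ∑ b, ∑ i, c i * (DH.v p b * DD.v (e1 i) b) := by
              refine Finset.sum_congr rfl fun b _ => ?_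
              rw [hx, Finset.mul_sum]
              exact Finset.sum_congr rfl fun i _ => by ring
          _ = ∑ i, c i * ∑ b, DH.v p b * DD.v (e1 i) b := by
              rw [Finset.sum_comm]
              exact Finset.sum_congr rfl fun i _ => (Finset.mul_sum _ _ _).symm
          _ = ρ⁻¹ * ∑ i, (∑ a, DH.v (e0 l) a * DD.v (e1 i) a) * c0 i := by
              rw [Finset.mul_sum]
              refine Finset.sum_congr rfl fun i _ => ?_
              rw [hcdef, hpl]
              ring
      rw [e, hkl, mul_zero]
    have hterm : ∀ p : Fin (min m n), (DH.s p * ∑ b, DH.v p b * x b) ^ 2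
        ≤ DH.s j ^ 2 * (∑ b, DH.v p b * x b) ^ 2 := by
      intro p
      by_cases hp : (p : ℕ) < J
      · rw [hzero p hp]
        simp
      · have hjp : j ≤ p := by rw [Fin.le_def]; omega
        have h1 : DH.s p ≤ DH.s j := DH.s_anti _ _ hjp
        have h2 : 0 ≤ DH.s p := DH.s_nonneg p
        have h3 : DH.s p ^ 2 ≤ DH.s j ^ 2 := by nlinarith
        calc (DH.s p * ∑ b, DH.v p b * x b) ^ 2
            = DH.s p ^ 2 * (∑ b, DH.v p b * x b) ^ 2 := by ring
          _ ≤ DH.s j ^ 2 * (∑ b, DH.v p b * x b) ^ 2 :=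
              mul_le_mul_of_nonneg_right h3 (sq_nonneg _)
    calc ∑ p, (DH.s p * ∑ b, DH.v p b * x b) ^ 2
        ≤ ∑ p, DH.s j ^ 2 * (∑ b, DH.v p b * x b) ^ 2 :=
          Finset.sum_le_sum fun p _ => hterm p
      _ = DH.s j ^ 2 * ∑ p, (∑ b, DH.v p b * x b) ^ 2 := (Finset.mul_sum _ _ _).symm
      _ ≤ DH.s j ^ 2 * 1 := by
          refine mul_le_mul_of_nonneg_left ?_ (sq_nonneg _)
          rw [← hxsum]
          exact bessel (v_orth1 DH) (v_orth2 DH) Finset.univ x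
      _ = DH.s j ^ 2 := mul_one _
  have h1 : DD.s j ≤ pn ((H + Z).mulVec x) := by
    have e : DD.s j = Real.sqrt (DD.s j ^ 2) := (Real.sqrt_sq (DD.s_nonneg j)).symm
    rw [e]
    exact Real.sqrt_le_sqrt hlow
  have h2 : pn (H.mulVec x) ≤ DH.s j := pn_le_of_sq_le (DH.s_nonneg j) hup
  have h3 : pn (Z.mulVec x) ≤ specNorm Z := le_spec Z x (le_of_eq hxsum)
  have h4 : (H + Z).mulVec x = fun a => H.mulVec x a + Z.mulVec x a := by
    rw [Matrix.add_mulVec]; rfl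
  calc DD.s j ≤ pn ((H + Z).mulVec x) := h1
    _ = pn (fun a => H.mulVec x a + Z.mulVec x a) := by rw [h4]
    _ ≤ pn (H.mulVec x) + pn (Z.mulVec x) := pn_add _ _
    _ ≤ DH.s j + specNorm Z := add_le_add h2 h3

end Weyl


section Rank

lemma s_zero_of_rank {m n : ℕ} {H : Matrix (Fin m) (Fin n) ℝ} (D : SVDOf H)
    {n₀ : ℕ} (hrank : H.rank = n₀) {i : Fin (min m n)} (hi : n₀ ≤ (i : ℕ)) :
    D.s i = 0 := by
  classical
  by_contra hsi
  set t : Finset (Fin (min m n)) := Finset.univ.filter (fun p => D.s p ≠ 0) with ht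
  -- linear independence of the u family
  have hLIfull : LinearIndependent ℝ D.u := by
    rw [Fintype.linearIndependent_iff]
    intro g hg p
    have h1 : ∑ a, (∑ q, g q • D.u q) a * D.u p a = 0 := by
      rw [hg]; simp
    have h2 : ∑ a, (∑ q, g q • D.u q) a * D.u p a = g p := by
      calc ∑ a, (∑ q, g q • D.u q) a * D.u p a
          = ∑ a, ∑ q, g q * (D.u q a * D.u p a) := by
            refine Finset.sum_congr rfl fun a _ => ?_
            rw [Finset.sum_apply, Finset.sum_mul]
            exact Finset.sum_congr rfl fun q _ => by
              simp only [Pi.smul_apply, smul_eq_mul]; ring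
        _ = ∑ q, g q * ∑ a, D.u q a * D.u p a := by
            rw [Finset.sum_comm]
            exact Finset.sum_congr rfl fun q _ => (Finset.mul_sum _ _ _).symm
        _ = g p := by
            rw [Finset.sum_eq_single_of_mem p (Finset.mem_univ p) (fun q _ hq => by
              rw [u_orth2 D q p hq, mul_zero])]
            rw [u_orth1 D p, mul_one]
    rw [h2] at h1
    exact h1
  have hLI : LinearIndependent ℝ (fun p : {p // p ∈ t} => D.u p.1) :=
    hLIfull.comp Subtype.val Subtype.val_injective
  -- range = span
  have hrange : LinearMap.range H.mulVecLin
      = Submodule.span ℝ (Set.range fun p : {p // p ∈ t} => D.u p.1) := by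
    apply le_antisymm
    · rintro y ⟨w, rfl⟩
      have hy : H.mulVecLin w = ∑ p ∈ t, (D.s p * ∑ b, D.v p b * w b) • D.u p := by
        have hfull : H.mulVecLin w = ∑ p, (D.s p * ∑ b, D.v p b * w b) • D.u p := by
          funext a
          rw [Matrix.mulVecLin_apply, svd_mulVec D w]
          rw [Finset.sum_apply]
          exact Finset.sum_congr rfl fun p _ => by
            simp only [Pi.smul_apply, smul_eq_mul]
        rw [hfull]
        refine (Finset.sum_subset (Finset.subset_univ t) fun p _ hp => ?_).symm
        have hs0 : D.s p = 0 := by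
          by_contra hs
          exact hp (Finset.mem_filter.mpr ⟨Finset.mem_univ p, hs⟩)
        rw [hs0, zero_mul, zero_smul]
      rw [hy]
      exact Submodule.sum_mem _ fun p hp => Submodule.smul_mem _ _
        (Submodule.subset_span ⟨⟨p, hp⟩, rfl⟩)
    · rw [Submodule.span_le]
      rintro y ⟨⟨p, hp⟩, rfl⟩
      have hsp : D.s p ≠ 0 := (Finset.mem_filter.mp hp).2
      refine ⟨(D.s p)⁻¹ • D.v p, ?_⟩
      show H.mulVecLin ((D.s p)⁻¹ • D.v p) = D.u p
      rw [_root_.map_smul, Matrix.mulVecLin_apply, svd_mulVec_basis D p]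
      funext a
      simp only [Pi.smul_apply, smul_eq_mul]
      field_simp
  have hcard : t.card = n₀ := by
    have h1 : H.rank = t.card := by
      rw [Matrix.rank, hrange, finrank_span_eq_card hLI]
      simp [Fintype.card_coe]
    omega
  -- contradiction via cardinality
  have hfdef : ∀ l : Fin ((i : ℕ) + 1), (l : ℕ) < min m n :=
    fun l => lt_of_le_of_lt (Nat.lt_succ_iff.mp l.isLt) i.isLt
  set f : Fin ((i : ℕ) + 1) → Fin (min m n) := fun l => ⟨(l : ℕ), hfdef l⟩ with hf
  have hmem : ∀ l, f l ∈ t := by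
    intro l
    refine Finset.mem_filter.mpr ⟨Finset.mem_univ _, ?_⟩
    have hle : f l ≤ i := by
      rw [hf, Fin.le_def]
      exact Nat.lt_succ_iff.mp l.isLt
    have h1 : D.s i ≤ D.s (f l) := D.s_anti _ i hle
    have h2 : 0 < D.s i := (D.s_nonneg i).lt_of_ne (Ne.symm hsi)
    exact ne_of_gt (lt_of_lt_of_le h2 h1)
  have hcardle : (Finset.univ : Finset (Fin ((i : ℕ) + 1))).card ≤ t.card := by
    apply Finset.card_le_card_of_injOn f (fun l _ => hmem l)
    intro a _ b _ hab
    have h3 : (f a : ℕ) = (f b : ℕ) := congrArg Fin.val hab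
    rw [hf] at h3
    exact Fin.ext h3
  rw [Finset.card_univ, Fintype.card_fin, hcard] at hcardle
  omega

end Rank


section Sorted

lemma sorted_bound {μ k : ℕ} (S w : Fin μ → ℝ) (hS0 : ∀ q, 0 ≤ S q)
    (hanti : ∀ i j : Fin μ, i ≤ j → S j ≤ S i)
    (hw0 : ∀ q, 0 ≤ w q) (hw1 : ∀ q, w q ≤ 1)
    (hwk : ∑ q ∈ Finset.univ.filter (fun q : Fin μ => ¬ (q : ℕ) < k), w q ≤ (k : ℝ)) :
    ∑ q ∈ Finset.univ.filter (fun q : Fin μ => ¬ (q : ℕ) < k), S q ^ 2 * w q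
      ≤ ∑ q ∈ (Finset.univ.filter (fun q : Fin μ => ¬ (q : ℕ) < k)).filter
          (fun q : Fin μ => (q : ℕ) < 2 * k), S q ^ 2 := by
  classical
  set Kb : Finset (Fin μ) := Finset.univ.filter (fun q => ¬ (q : ℕ) < k) with hKb
  set K2 : Finset (Fin μ) := Kb.filter (fun q => (q : ℕ) < 2 * k) with hK2
  set K3 : Finset (Fin μ) := Kb.filter (fun q => ¬ (q : ℕ) < 2 * k) with hK3
  have hsplit : ∀ F : Fin μ → ℝ, ∑ q ∈ Kb, F q = ∑ q ∈ K2, F q + ∑ q ∈ K3, F q :=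
    fun F => (Finset.sum_filter_add_sum_filter_not Kb (fun q => (q : ℕ) < 2 * k) F).symm
  by_cases h2k : 2 * k < μ
  · set q0 : Fin μ := ⟨2 * k, h2k⟩ with hq0
    set τ := S q0 ^ 2 with hτ
    have hτ0 : 0 ≤ τ := sq_nonneg _
    have hK3le : ∀ q ∈ K3, S q ^ 2 ≤ τ := by
      intro q hq
      have hm := Finset.mem_filter.mp hq
      have hq2k : 2 * k ≤ (q : ℕ) := Nat.le_of_not_lt hm.2
      have hle : q0 ≤ q := by rw [hq0, Fin.le_def]; exact hq2k
      have h1 : S q ≤ S q0 := hanti _ _ hle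
      have h2 : 0 ≤ S q := hS0 q
      rw [hτ]; nlinarith
    have hK2ge : ∀ q ∈ K2, τ ≤ S q ^ 2 := by
      intro q hq
      have hm := Finset.mem_filter.mp hq
      have hle : q ≤ q0 := by rw [hq0, Fin.le_def]; exact le_of_lt hm.2
      have h1 : S q0 ≤ S q := hanti _ _ hle
      have h2 : 0 ≤ S q0 := hS0 q0
      rw [hτ]; nlinarith
    have hK2card : K2.card = k := by
      have h1 : K2.card = (Finset.Ico k (2 * k)).card := by
        refine Finset.card_bij' (fun q _ => (q : ℕ))
          (fun x hx => (⟨x, lt_trans (Finset.mem_Ico.mp hx).2 h2k⟩ : Fin μ)) ?_ ?_ ?_ ?_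
        · intro a ha
          have hm := Finset.mem_filter.mp ha
          have hm2 := Finset.mem_filter.mp hm.1
          have h3 : ¬ (a : ℕ) < k := hm2.2
          have h4 : (a : ℕ) < 2 * k := hm.2
          show (a : ℕ) ∈ Finset.Ico k (2 * k)
          rw [Finset.mem_Ico]
          omega
        · intro b hb
          have hm := Finset.mem_Ico.mp hb
          rw [hK2, Finset.mem_filter, hKb, Finset.mem_filter]
          refine ⟨⟨Finset.mem_univ _, ?_⟩, ?_⟩ <;> simp <;> omega
        · intro a ha; exact Fin.ext rfl
        · intro b hb; rfl
      rw [h1, Nat.card_Ico]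
      omega
    have hw2sum : ∑ q ∈ K2, w q ≤ (k : ℝ) := by
      have h0 : 0 ≤ ∑ q ∈ K3, w q := Finset.sum_nonneg fun q _ => hw0 q
      have := hsplit w
      linarith [hwk]
    have step3 : ∑ q ∈ K3, S q ^ 2 * w q ≤ τ * ((k : ℝ) - ∑ q ∈ K2, w q) := by
      have h1 : ∑ q ∈ K3, S q ^ 2 * w q ≤ ∑ q ∈ K3, τ * w q :=
        Finset.sum_le_sum fun q hq => mul_le_mul_of_nonneg_right (hK3le q hq) (hw0 q)
      have h2 : ∑ q ∈ K3, τ * w q = τ * ∑ q ∈ K3, w q := (Finset.mul_sum _ _ _).symm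
      have h3 : ∑ q ∈ K3, w q ≤ (k : ℝ) - ∑ q ∈ K2, w q := by
        have := hsplit w
        linarith [hwk]
      calc ∑ q ∈ K3, S q ^ 2 * w q ≤ τ * ∑ q ∈ K3, w q := by rw [← h2]; exact h1
        _ ≤ τ * ((k : ℝ) - ∑ q ∈ K2, w q) := mul_le_mul_of_nonneg_left h3 hτ0
    have step2 : ∑ q ∈ K2, S q ^ 2 * w q + τ * ((k : ℝ) - ∑ q ∈ K2, w q)
        ≤ ∑ q ∈ K2, S q ^ 2 := by
      have e1 : (k : ℝ) - ∑ q ∈ K2, w q = ∑ q ∈ K2, (1 - w q) := by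
        rw [Finset.sum_sub_distrib, Finset.sum_const, hK2card]
        simp
      have e2 : τ * ∑ q ∈ K2, (1 - w q) = ∑ q ∈ K2, τ * (1 - w q) := Finset.mul_sum _ _ _
      have h4 : ∑ q ∈ K2, τ * (1 - w q) ≤ ∑ q ∈ K2, S q ^ 2 * (1 - w q) :=
        Finset.sum_le_sum fun q hq => mul_le_mul_of_nonneg_right (hK2ge q hq)
          (by linarith [hw1 q])
      have e3 : ∑ q ∈ K2, S q ^ 2 * w q + ∑ q ∈ K2, S q ^ 2 * (1 - w q)
          = ∑ q ∈ K2, S q ^ 2 := by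
        rw [← Finset.sum_add_distrib]
        exact Finset.sum_congr rfl fun q _ => by ring
      rw [e1, e2]
      linarith
    calc ∑ q ∈ Kb, S q ^ 2 * w q
        = ∑ q ∈ K2, S q ^ 2 * w q + ∑ q ∈ K3, S q ^ 2 * w q := hsplit _
      _ ≤ ∑ q ∈ K2, S q ^ 2 * w q + τ * ((k : ℝ) - ∑ q ∈ K2, w q) := by linarith [step3]
      _ ≤ ∑ q ∈ K2, S q ^ 2 := step2
  · have hK2eq : K2 = Kb := by
      rw [hK2]
      apply Finset.filter_true_of_mem
      intro q _
      exact lt_of_lt_of_le q.isLt (Nat.le_of_not_lt h2k)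
    rw [hK2eq]
    exact Finset.sum_le_sum fun q _ =>
      mul_le_of_le_one_right (sq_nonneg _) (hw1 q)

end Sorted

section Frob

lemma frob_sq {m n : ℕ} (X : Matrix (Fin m) (Fin n) ℝ) :
    frobNorm X ^ 2 = ∑ a, ∑ b, X a b ^ 2 :=
  Real.sq_sqrt (Finset.sum_nonneg fun a _ => Finset.sum_nonneg fun b _ => sq_nonneg _)

lemma frob_nonneg {m n : ℕ} (X : Matrix (Fin m) (Fin n) ℝ) : 0 ≤ frobNorm X :=
  Real.sqrt_nonneg _

lemma frob_eq_pn {m n : ℕ} (X : Matrix (Fin m) (Fin n) ℝ) :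
    frobNorm X = pn (fun p : Fin m × Fin n => X p.1 p.2) := by
  unfold frobNorm pn
  congr 1
  rw [Fintype.sum_prod_type]

lemma frob_sub_triangle {m n : ℕ} (X Y : Matrix (Fin m) (Fin n) ℝ) :
    frobNorm (X - Y) ≤ frobNorm X + frobNorm Y := by
  rw [frob_eq_pn (X - Y), frob_eq_pn X, frob_eq_pn Y]
  have e : (fun p : Fin m × Fin n => (X - Y) p.1 p.2)
      = fun p : Fin m × Fin n => X p.1 p.2 - Y p.1 p.2 := by
    funext p
    rw [Matrix.sub_apply]
  rw [e]
  exact pn_sub _ _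

lemma sub_sq_bound {ι : Type*} [Fintype ι] (X Y : ι → ℝ) :
    ∑ a, (X a - Y a) ^ 2 ≤ 2 * ∑ a, X a ^ 2 + 2 * ∑ a, Y a ^ 2 := by
  have h := pn_sub X Y
  have e := pn_sq (fun a => X a - Y a)
  have ex := pn_sq X
  have ey := pn_sq Y
  nlinarith [pn_nonneg X, pn_nonneg Y, pn_nonneg (fun a => X a - Y a),
    sq_nonneg (pn X - pn Y)]

end Frob

end Stmt4A

set_option maxHeartbeats 2000000 in
open Stmt4A in
/-- `‖Π_k(H+Z) − H‖_F² ≤ 18 (k‖Z‖₂² + Σ_{i=k+1}^{n₀} s_i(H)²)` for `k = 0,…,n₀`. -/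
theorem stmt4 {m n : ℕ} (H Z : Matrix (Fin m) (Fin n) ℝ) (n₀ : ℕ)
    (hrank : H.rank = n₀) (DH : SVDOf H) (DHhat : SVDOf (H + Z))
    (k : ℕ) (hk : k ≤ n₀) :
    frobNorm (DHhat.trunc k - H) ^ 2 ≤
      18 * ((k : ℝ) * specNorm Z ^ 2 +
        ∑ i ∈ Finset.univ.filter
          (fun i : Fin (min m n) => k ≤ (i : ℕ) ∧ (i : ℕ) < n₀), DH.s i ^ 2) := by
  classical
  set K : Finset (Fin (min m n)) :=
    Finset.univ.filter (fun i : Fin (min m n) => (i : ℕ) < k) with hK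
  set Kb : Finset (Fin (min m n)) :=
    Finset.univ.filter (fun i : Fin (min m n) => ¬ (i : ℕ) < k) with hKb
  set σ := specNorm Z with hσ
  have hσ0 : 0 ≤ σ := spec_nonneg Z
  set tail := ∑ i ∈ Finset.univ.filter
      (fun i : Fin (min m n) => k ≤ (i : ℕ) ∧ (i : ℕ) < n₀), DH.s i ^ 2 with htail
  have htail0 : 0 ≤ tail := Finset.sum_nonneg fun i _ => sq_nonneg _
  have hKcardN : K.card ≤ k := by
    have h := Finset.card_le_card_of_injOn (s := K) (t := Finset.range k)
      (fun i : Fin (min m n) => (i : ℕ))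
      (fun i hi => Finset.mem_range.mpr (Finset.mem_filter.mp hi).2)
      (fun a _ b _ h => Fin.ext h)
    simpa [Finset.card_range] using h
  have hKcard : (K.card : ℝ) ≤ (k : ℝ) := by exact_mod_cast hKcardN
  have hu2sum : ∀ p, ∑ a, DH.u p a ^ 2 = 1 := fun p => by
    rw [← u_orth1 DH p]
    exact Finset.sum_congr rfl fun a _ => pow_two _
  have hv2sum : ∀ p, ∑ b, DH.v p b ^ 2 = 1 := fun p => by
    rw [← v_orth1 DH p]
    exact Finset.sum_congr rfl fun b _ => pow_two _
  have hu2sumhat : ∀ p, ∑ a, DHhat.u p a ^ 2 = 1 := fun p => by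
    rw [← u_orth1 DHhat p]
    exact Finset.sum_congr rfl fun a _ => pow_two _
  have hv2sumhat : ∀ p, ∑ b, DHhat.v p b ^ 2 = 1 := fun p => by
    rw [← v_orth1 DHhat p]
    exact Finset.sum_congr rfl fun b _ => pow_two _
  set A1 : Matrix (Fin m) (Fin n) ℝ :=
    Matrix.of (fun a b => ∑ i ∈ K, (∑ c, DHhat.u i c * Z c b) * DHhat.u i a) with hA1
  set g : Fin (min m n) → Fin m → ℝ :=
    fun p a => DH.u p a - ∑ i ∈ K, (∑ c, DHhat.u i c * DH.u p c) * DHhat.u i a with hg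
  set A2 : Matrix (Fin m) (Fin n) ℝ :=
    Matrix.of (fun a b => ∑ p, (DH.s p * g p a) * DH.v p b) with hA2
  -- key identity
  have hkey : ∀ (b : Fin n) (i : Fin (min m n)),
      (∑ c, DHhat.u i c * Z c b)
        + ∑ p, (DH.s p * DH.v p b) * (∑ c, DHhat.u i c * DH.u p c)
      = DHhat.s i * DHhat.v i b := by
    intro b i
    have h1 : ∑ p, (DH.s p * DH.v p b) * (∑ c, DHhat.u i c * DH.u p c)
        = ∑ c, DHhat.u i c * H c b := by
      calc ∑ p, (DH.s p * DH.v p b) * (∑ c, DHhat.u i c * DH.u p c)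
          = ∑ p, ∑ c, DHhat.u i c * (DH.s p * DH.u p c * DH.v p b) := by
            refine Finset.sum_congr rfl fun p _ => ?_
            rw [Finset.mul_sum]
            exact Finset.sum_congr rfl fun c _ => by ring
        _ = ∑ c, ∑ p, DHhat.u i c * (DH.s p * DH.u p c * DH.v p b) := Finset.sum_comm
        _ = ∑ c, DHhat.u i c * H c b := by
            refine Finset.sum_congr rfl fun c _ => ?_
            rw [← Finset.mul_sum, ← svd_entry DH c b]
    have h2 : (∑ c, DHhat.u i c * Z c b) + ∑ c, DHhat.u i c * H c b
        = ∑ c, DHhat.u i c * (H + Z) c b := by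
      rw [← Finset.sum_add_distrib]
      refine Finset.sum_congr rfl fun c _ => ?_
      rw [Matrix.add_apply]
      ring
    have h3 : ∑ c, DHhat.u i c * (H + Z) c b
        = ∑ q, (DHhat.s q * DHhat.v q b) * (∑ c, DHhat.u i c * DHhat.u q c) := by
      calc ∑ c, DHhat.u i c * (H + Z) c b
          = ∑ c, ∑ q, (DHhat.s q * DHhat.v q b) * (DHhat.u i c * DHhat.u q c) := by
            refine Finset.sum_congr rfl fun c _ => ?_
            rw [svd_entry DHhat c b, Finset.mul_sum]
            exact Finset.sum_congr rfl fun q _ => by ring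
        _ = ∑ q, ∑ c, (DHhat.s q * DHhat.v q b) * (DHhat.u i c * DHhat.u q c) :=
            Finset.sum_comm
        _ = ∑ q, (DHhat.s q * DHhat.v q b) * (∑ c, DHhat.u i c * DHhat.u q c) :=
            Finset.sum_congr rfl fun q _ => (Finset.mul_sum _ _ _).symm
    have h4 : ∑ q, (DHhat.s q * DHhat.v q b) * (∑ c, DHhat.u i c * DHhat.u q c)
        = DHhat.s i * DHhat.v i b := by
      rw [Finset.sum_eq_single_of_mem i (Finset.mem_univ i) (fun q _ hq => by
        rw [u_orth2 DHhat i q (Ne.symm hq), mul_zero])]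
      rw [u_orth1 DHhat i, mul_one]
    rw [h1, h2, h3, h4]
  -- claim 1 : trunc k - H = A1 - A2
  have claim1 : DHhat.trunc k - H = A1 - A2 := by
    ext a b
    have htr : (DHhat.trunc k) a b = ∑ i ∈ K, (DHhat.s i * DHhat.v i b) * DHhat.u i a := by
      unfold SVDOf.trunc
      rw [Matrix.sum_apply]
      exact Finset.sum_congr rfl fun i _ => by
        simp only [Matrix.of_apply]
        ring
    have hA1e : A1 a b = ∑ i ∈ K, (∑ c, DHhat.u i c * Z c b) * DHhat.u i a := rfl
    have hA2e : A2 a b = H a b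
        - ∑ i ∈ K, (∑ p, (DH.s p * DH.v p b) * (∑ c, DHhat.u i c * DH.u p c)) * DHhat.u i a := by
      calc A2 a b = ∑ p, (DH.s p * DH.u p a * DH.v p b
            - (∑ i ∈ K, (∑ c, DHhat.u i c * DH.u p c) * DHhat.u i a) * (DH.s p * DH.v p b)) := by
            simp only [hA2, Matrix.of_apply, hg]
            refine Finset.sum_congr rfl fun p _ => ?_
            ring
        _ = (∑ p, DH.s p * DH.u p a * DH.v p b)
            - ∑ p, (∑ i ∈ K, (∑ c, DHhat.u i c * DH.u p c) * DHhat.u i a)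
              * (DH.s p * DH.v p b) := Finset.sum_sub_distrib _ _
        _ = H a b - ∑ i ∈ K, (∑ p, (DH.s p * DH.v p b)
              * (∑ c, DHhat.u i c * DH.u p c)) * DHhat.u i a := by
            rw [← svd_entry DH a b]
            congr 1
            calc ∑ p, (∑ i ∈ K, (∑ c, DHhat.u i c * DH.u p c) * DHhat.u i a)
                  * (DH.s p * DH.v p b)
                = ∑ p, ∑ i ∈ K, ((DH.s p * DH.v p b)
                    * (∑ c, DHhat.u i c * DH.u p c)) * DHhat.u i a := by
                  refine Finset.sum_congr rfl fun p _ => ?_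
                  rw [Finset.sum_mul]
                  exact Finset.sum_congr rfl fun i _ => by ring
              _ = ∑ i ∈ K, ∑ p, ((DH.s p * DH.v p b)
                    * (∑ c, DHhat.u i c * DH.u p c)) * DHhat.u i a := Finset.sum_comm
              _ = ∑ i ∈ K, (∑ p, (DH.s p * DH.v p b)
                    * (∑ c, DHhat.u i c * DH.u p c)) * DHhat.u i a :=
                  Finset.sum_congr rfl fun i _ => by rw [Finset.sum_mul]
    have hKsum : ∑ i ∈ K, (DHhat.s i * DHhat.v i b) * DHhat.u i a
        = A1 a b + ∑ i ∈ K, (∑ p, (DH.s p * DH.v p b)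
            * (∑ c, DHhat.u i c * DH.u p c)) * DHhat.u i a := by
      rw [hA1e, ← Finset.sum_add_distrib]
      refine Finset.sum_congr rfl fun i _ => ?_
      rw [← hkey b i]
      ring
    rw [Matrix.sub_apply, Matrix.sub_apply, htr, hKsum, hA2e]
    ring
  -- bound for A1
  have boundA1 : frobNorm A1 ^ 2 ≤ (k : ℝ) * σ ^ 2 := by
    rw [frob_sq]
    rw [Finset.sum_comm]
    have h2 : ∀ b, ∑ a, A1 a b ^ 2 = ∑ i ∈ K, (∑ c, DHhat.u i c * Z c b) ^ 2 := by
      intro b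
      have e : ∀ a, A1 a b = ∑ i ∈ K, (∑ c, DHhat.u i c * Z c b) * DHhat.u i a :=
        fun a => rfl
      simp only [e]
      exact ortho_expand (u_orth1 DHhat) (u_orth2 DHhat) K _
    calc ∑ b, ∑ a, A1 a b ^ 2
        = ∑ b, ∑ i ∈ K, (∑ c, DHhat.u i c * Z c b) ^ 2 :=
          Finset.sum_congr rfl fun b _ => h2 b
      _ = ∑ i ∈ K, ∑ b, (∑ c, DHhat.u i c * Z c b) ^ 2 := Finset.sum_comm
      _ ≤ ∑ i ∈ K, σ ^ 2 := by
          refine Finset.sum_le_sum fun i _ => ?_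
          have hflip : ∀ b, (∑ c, DHhat.u i c * Z c b) = ∑ c, Z c b * DHhat.u i c :=
            fun b => Finset.sum_congr rfl fun c _ => mul_comm _ _
          calc ∑ b, (∑ c, DHhat.u i c * Z c b) ^ 2
              = ∑ b, (∑ c, Z c b * DHhat.u i c) ^ 2 :=
                Finset.sum_congr rfl fun b _ => by rw [hflip b]
            _ ≤ σ ^ 2 := col_bound Z (DHhat.u i) (le_of_eq (hu2sumhat i))
      _ = (K.card : ℝ) * σ ^ 2 := by rw [Finset.sum_const, nsmul_eq_mul]
      _ ≤ (k : ℝ) * σ ^ 2 := mul_le_mul_of_nonneg_right hKcard (sq_nonneg σ)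
  -- Frobenius of A2
  set qn : Fin (min m n) → ℝ := fun p => ∑ a, g p a ^ 2 with hqn
  have hfrobA2 : frobNorm A2 ^ 2 = ∑ p, DH.s p ^ 2 * qn p := by
    rw [frob_sq]
    have h2 : ∀ a, ∑ b, A2 a b ^ 2 = ∑ p, (DH.s p * g p a) ^ 2 := by
      intro a
      have e : ∀ b, A2 a b = ∑ p, (DH.s p * g p a) * DH.v p b := fun b => rfl
      simp only [e]
      exact ortho_expand (v_orth1 DH) (v_orth2 DH) Finset.univ _
    calc ∑ a, ∑ b, A2 a b ^ 2 = ∑ a, ∑ p, (DH.s p * g p a) ^ 2 :=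
          Finset.sum_congr rfl fun a _ => h2 a
      _ = ∑ p, ∑ a, (DH.s p * g p a) ^ 2 := Finset.sum_comm
      _ = ∑ p, DH.s p ^ 2 * qn p := by
          refine Finset.sum_congr rfl fun p _ => ?_
          simp only [hqn]
          rw [Finset.mul_sum]
          exact Finset.sum_congr rfl fun a _ => by ring
  have hq0 : ∀ p, 0 ≤ qn p := fun p => sumsq_nonneg _
  have hqle1 : ∀ p, qn p ≤ 1 := by
    intro p
    have h := q_contract (u_orth1 DHhat) (u_orth2 DHhat) K (DH.u p)
    simp only [hqn, hg]
    calc ∑ a, (DH.u p a - ∑ i ∈ K, (∑ c, DHhat.u i c * DH.u p c) * DHhat.u i a) ^ 2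
        ≤ ∑ a, DH.u p a ^ 2 := h
      _ = 1 := hu2sum p
  -- tail part over Kb
  have hKbtail : ∑ p ∈ Kb, DH.s p ^ 2 * qn p ≤ tail := by
    calc ∑ p ∈ Kb, DH.s p ^ 2 * qn p
        ≤ ∑ p ∈ Kb, (if (p : ℕ) < n₀ then DH.s p ^ 2 else 0) := by
          refine Finset.sum_le_sum fun p hp => ?_
          by_cases hpn : (p : ℕ) < n₀
          · rw [if_pos hpn]
            exact mul_le_of_le_one_right (sq_nonneg _) (hqle1 p)
          · rw [if_neg hpn, s_zero_of_rank DH hrank (Nat.le_of_not_lt hpn)]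
            simp [hq0 p]
      _ = ∑ p ∈ Kb.filter (fun p : Fin (min m n) => (p : ℕ) < n₀), DH.s p ^ 2 :=
          (Finset.sum_filter _ _).symm
      _ ≤ tail := by
          rw [htail]
          refine Finset.sum_le_sum_of_subset_of_nonneg ?_ (fun p _ _ => sq_nonneg _)
          intro p hp
          have h1 := Finset.mem_filter.mp hp
          have h2 := Finset.mem_filter.mp h1.1
          exact Finset.mem_filter.mpr ⟨Finset.mem_univ _, Nat.le_of_not_lt h2.2, h1.2⟩
  -- per-p bound on K
  have htermK : ∀ p, DH.s p ^ 2 * qn p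
      ≤ 2 * (∑ q ∈ Kb, (DHhat.s q * (∑ b, DHhat.v q b * DH.v p b)) ^ 2) + 2 * σ ^ 2 := by
    intro p
    set Yz : Fin m → ℝ := fun a => (Z.mulVec (DH.v p)) a
      - ∑ i ∈ K, (∑ c, DHhat.u i c * (Z.mulVec (DH.v p)) c) * DHhat.u i a with hYz
    set Xh : Fin m → ℝ := fun a =>
      ∑ q ∈ Kb, (DHhat.s q * (∑ b, DHhat.v q b * DH.v p b)) * DHhat.u q a with hXh
    have hHv : H.mulVec (DH.v p) = fun a => DH.s p * DH.u p a := svd_mulVec_basis DH p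
    have hW : (H + Z).mulVec (DH.v p)
        = fun a => ∑ q, (DHhat.s q * ∑ b, DHhat.v q b * DH.v p b) * DHhat.u q a :=
      svd_mulVec DHhat (DH.v p)
    have hHW : ∀ a, H.mulVec (DH.v p) a
        = (H + Z).mulVec (DH.v p) a - Z.mulVec (DH.v p) a := by
      intro a
      rw [Matrix.add_mulVec]
      simp
    have hQHv : ∀ a, DH.s p * g p a
        = H.mulVec (DH.v p) a
          - ∑ i ∈ K, (∑ c, DHhat.u i c * H.mulVec (DH.v p) c) * DHhat.u i a := by
      intro a
      simp only [hHv]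
      have e1 : ∀ i : Fin (min m n), (∑ c, DHhat.u i c * (DH.s p * DH.u p c))
          = DH.s p * ∑ c, DHhat.u i c * DH.u p c := by
        intro i
        rw [Finset.mul_sum]
        exact Finset.sum_congr rfl fun c _ => by ring
      simp only [e1]
      simp only [hg]
      rw [mul_sub, Finset.mul_sum]
      congr 1
      exact Finset.sum_congr rfl fun i _ => by ring
    have hQW : ∀ a, (H + Z).mulVec (DH.v p) a
        - ∑ i ∈ K, (∑ c, DHhat.u i c * (H + Z).mulVec (DH.v p) c) * DHhat.u i a
        = Xh a := by
      intro a
      simp only [hW]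
      have e1 : ∀ i : Fin (min m n),
          (∑ c, DHhat.u i c * ∑ q, (DHhat.s q * ∑ b, DHhat.v q b * DH.v p b) * DHhat.u q c)
          = DHhat.s i * ∑ b, DHhat.v i b * DH.v p b := by
        intro i
        calc ∑ c, DHhat.u i c * ∑ q, (DHhat.s q * ∑ b, DHhat.v q b * DH.v p b) * DHhat.u q c
            = ∑ c, ∑ q, (DHhat.s q * ∑ b, DHhat.v q b * DH.v p b)
                * (DHhat.u i c * DHhat.u q c) := by
              refine Finset.sum_congr rfl fun c _ => ?_
              rw [Finset.mul_sum]
              exact Finset.sum_congr rfl fun q _ => by ring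
          _ = ∑ q, (DHhat.s q * ∑ b, DHhat.v q b * DH.v p b)
                * (∑ c, DHhat.u i c * DHhat.u q c) := by
              rw [Finset.sum_comm]
              exact Finset.sum_congr rfl fun q _ => (Finset.mul_sum _ _ _).symm
          _ = DHhat.s i * ∑ b, DHhat.v i b * DH.v p b := by
              rw [Finset.sum_eq_single_of_mem i (Finset.mem_univ i) (fun q _ hq => by
                rw [u_orth2 DHhat i q (Ne.symm hq), mul_zero])]
              rw [u_orth1 DHhat i, mul_one]
      simp only [e1]
      have hsplituniv : ∑ q, (DHhat.s q * ∑ b, DHhat.v q b * DH.v p b) * DHhat.u q a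
          = ∑ q ∈ K, (DHhat.s q * ∑ b, DHhat.v q b * DH.v p b) * DHhat.u q a
            + ∑ q ∈ Kb, (DHhat.s q * ∑ b, DHhat.v q b * DH.v p b) * DHhat.u q a := by
        rw [hK, hKb]
        exact (Finset.sum_filter_add_sum_filter_not Finset.univ
          (fun q : Fin (min m n) => (q : ℕ) < k) _).symm
      rw [hsplituniv]
      simp only [hXh]
      ring
    have hsg : ∀ a, DH.s p * g p a = Xh a - Yz a := by
      intro a
      rw [hQHv a]
      simp only [hHW]
      have e2 : ∀ i : Fin (min m n),
          (∑ c, DHhat.u i c * ((H + Z).mulVec (DH.v p) c - Z.mulVec (DH.v p) c))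
          = (∑ c, DHhat.u i c * (H + Z).mulVec (DH.v p) c)
            - (∑ c, DHhat.u i c * Z.mulVec (DH.v p) c) := by
        intro i
        rw [← Finset.sum_sub_distrib]
        exact Finset.sum_congr rfl fun c _ => by ring
      simp only [e2]
      have e3 : ∑ i ∈ K, ((∑ c, DHhat.u i c * (H + Z).mulVec (DH.v p) c)
            - (∑ c, DHhat.u i c * Z.mulVec (DH.v p) c)) * DHhat.u i a
          = ∑ i ∈ K, (∑ c, DHhat.u i c * (H + Z).mulVec (DH.v p) c) * DHhat.u i a
            - ∑ i ∈ K, (∑ c, DHhat.u i c * Z.mulVec (DH.v p) c) * DHhat.u i a := by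
        rw [← Finset.sum_sub_distrib]
        exact Finset.sum_congr rfl fun i _ => by ring
      rw [e3, ← hQW a, hYz]
      ring
    have hterm2 : DH.s p ^ 2 * qn p = ∑ a, (Xh a - Yz a) ^ 2 := by
      have e4 : DH.s p ^ 2 * qn p = ∑ a, (DH.s p * g p a) ^ 2 := by
        simp only [hqn]
        rw [Finset.mul_sum]
        exact Finset.sum_congr rfl fun a _ => by ring
      rw [e4]
      exact Finset.sum_congr rfl fun a _ => by rw [hsg a]
    have hX2 : ∑ a, Xh a ^ 2
        = ∑ q ∈ Kb, (DHhat.s q * (∑ b, DHhat.v q b * DH.v p b)) ^ 2 := by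
      simp only [hXh]
      exact ortho_expand (u_orth1 DHhat) (u_orth2 DHhat) Kb _
    have hY2 : ∑ a, Yz a ^ 2 ≤ σ ^ 2 := by
      simp only [hYz]
      calc ∑ a, ((Z.mulVec (DH.v p)) a
            - ∑ i ∈ K, (∑ c, DHhat.u i c * (Z.mulVec (DH.v p)) c) * DHhat.u i a) ^ 2
          ≤ ∑ a, (Z.mulVec (DH.v p)) a ^ 2 :=
            q_contract (u_orth1 DHhat) (u_orth2 DHhat) K _
        _ ≤ σ ^ 2 := sq_mulVec_le Z _ (le_of_eq (hv2sum p))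
    have h5 := sub_sq_bound Xh Yz
    rw [hX2] at h5
    rw [hterm2]
    linarith [hY2]
  -- sum over K
  set w : Fin (min m n) → ℝ :=
    fun q => ∑ p ∈ K, (∑ b, DHhat.v q b * DH.v p b) ^ 2 with hw
  have hw0 : ∀ q, 0 ≤ w q := fun q => Finset.sum_nonneg fun p _ => sq_nonneg _
  have hw1 : ∀ q, w q ≤ 1 := by
    intro q
    have h := bessel (v_orth1 DH) (v_orth2 DH) K (DHhat.v q)
    have hflip : ∀ p, (∑ b, DHhat.v q b * DH.v p b) = ∑ b, DH.v p b * DHhat.v q b :=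
      fun p => Finset.sum_congr rfl fun b _ => mul_comm _ _
    calc w q = ∑ p ∈ K, (∑ b, DH.v p b * DHhat.v q b) ^ 2 := by
          simp only [hw]
          exact Finset.sum_congr rfl fun p _ => by rw [hflip p]
      _ ≤ ∑ b, DHhat.v q b ^ 2 := h
      _ = 1 := hv2sumhat q
  have hwsum : ∑ q ∈ Kb, w q ≤ (k : ℝ) := by
    have hswap : ∑ q ∈ Kb, w q
        = ∑ p ∈ K, ∑ q ∈ Kb, (∑ b, DHhat.v q b * DH.v p b) ^ 2 := by
      simp only [hw]
      exact Finset.sum_comm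
    rw [hswap]
    calc ∑ p ∈ K, ∑ q ∈ Kb, (∑ b, DHhat.v q b * DH.v p b) ^ 2
        ≤ ∑ p ∈ K, (1 : ℝ) := by
          refine Finset.sum_le_sum fun p _ => ?_
          calc ∑ q ∈ Kb, (∑ b, DHhat.v q b * DH.v p b) ^ 2
              ≤ ∑ q, (∑ b, DHhat.v q b * DH.v p b) ^ 2 :=
                Finset.sum_le_sum_of_subset_of_nonneg (Finset.filter_subset _ _)
                  (fun q _ _ => sq_nonneg _)
            _ ≤ ∑ b, DH.v p b ^ 2 :=
                bessel (v_orth1 DHhat) (v_orth2 DHhat) Finset.univ (DH.v p)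
            _ = 1 := hv2sum p
      _ = (K.card : ℝ) := by rw [Finset.sum_const, nsmul_eq_mul, mul_one]
      _ ≤ (k : ℝ) := hKcard
  set K2 : Finset (Fin (min m n)) :=
    Kb.filter (fun q : Fin (min m n) => (q : ℕ) < 2 * k) with hK2
  have hB : ∑ q ∈ Kb, DHhat.s q ^ 2 * w q ≤ ∑ q ∈ K2, DHhat.s q ^ 2 := by
    rw [hK2, hKb]
    exact sorted_bound DHhat.s w DHhat.s_nonneg DHhat.s_anti hw0 hw1
      (by rw [← hKb]; exact hwsum)
  have hK2cardN : K2.card ≤ k := by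
    have h := Finset.card_le_card_of_injOn (s := K2) (t := Finset.Ico k (2 * k))
      (fun i : Fin (min m n) => (i : ℕ)) ?_ (fun a _ b _ h => Fin.ext h)
    · rw [Nat.card_Ico] at h
      omega
    · intro i hi
      have h1 := Finset.mem_filter.mp hi
      have h2 := Finset.mem_filter.mp h1.1
      rw [Finset.mem_coe, Finset.mem_Ico]
      exact ⟨Nat.le_of_not_lt h2.2, h1.2⟩
  have hK2s : ∑ q ∈ K2, DHhat.s q ^ 2 ≤ 2 * tail + 2 * (k : ℝ) * σ ^ 2 := by
    have hstep : ∑ q ∈ K2, DHhat.s q ^ 2 ≤ ∑ q ∈ K2, (2 * DH.s q ^ 2 + 2 * σ ^ 2) := by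
      refine Finset.sum_le_sum fun q _ => ?_
      have hwy := weyl DH DHhat q
      have h1 : 0 ≤ DHhat.s q := DHhat.s_nonneg q
      have h2 : 0 ≤ DH.s q := DH.s_nonneg q
      rw [← hσ] at hwy
      have h3 : DHhat.s q * DHhat.s q ≤ (DH.s q + σ) * (DH.s q + σ) :=
        mul_le_mul hwy hwy h1 (by linarith)
      nlinarith [h3, sq_nonneg (DH.s q - σ)]
    have hsplit2 : ∑ q ∈ K2, (2 * DH.s q ^ 2 + 2 * σ ^ 2)
        = 2 * (∑ q ∈ K2, DH.s q ^ 2) + 2 * (K2.card : ℝ) * σ ^ 2 := by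
      rw [Finset.sum_add_distrib, Finset.sum_const, ← Finset.mul_sum, nsmul_eq_mul]
      ring
    have htail2 : ∑ q ∈ K2, DH.s q ^ 2 ≤ tail := by
      calc ∑ q ∈ K2, DH.s q ^ 2
          ≤ ∑ q ∈ K2, (if (q : ℕ) < n₀ then DH.s q ^ 2 else 0) := by
            refine Finset.sum_le_sum fun q _ => ?_
            by_cases hqn : (q : ℕ) < n₀
            · rw [if_pos hqn]
            · rw [if_neg hqn, s_zero_of_rank DH hrank (Nat.le_of_not_lt hqn)]
              simp
        _ = ∑ q ∈ K2.filter (fun q : Fin (min m n) => (q : ℕ) < n₀), DH.s q ^ 2 :=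
            (Finset.sum_filter _ _).symm
        _ ≤ tail := by
            rw [htail]
            refine Finset.sum_le_sum_of_subset_of_nonneg ?_ (fun q _ _ => sq_nonneg _)
            intro q hq
            have h1 := Finset.mem_filter.mp hq
            have h2 := Finset.mem_filter.mp h1.1
            have h3 := Finset.mem_filter.mp h2.1
            exact Finset.mem_filter.mpr ⟨Finset.mem_univ _, Nat.le_of_not_lt h3.2, h1.2⟩
    have hcast : (K2.card : ℝ) ≤ (k : ℝ) := by exact_mod_cast hK2cardN
    calc ∑ q ∈ K2, DHhat.s q ^ 2 ≤ ∑ q ∈ K2, (2 * DH.s q ^ 2 + 2 * σ ^ 2) := hstep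
      _ = 2 * (∑ q ∈ K2, DH.s q ^ 2) + 2 * (K2.card : ℝ) * σ ^ 2 := hsplit2
      _ ≤ 2 * tail + 2 * (k : ℝ) * σ ^ 2 := by
          have h6 : (2 : ℝ) * (K2.card : ℝ) ≤ 2 * (k : ℝ) := by linarith
          have h7 : 2 * (K2.card : ℝ) * σ ^ 2 ≤ 2 * (k : ℝ) * σ ^ 2 :=
            mul_le_mul_of_nonneg_right h6 (sq_nonneg σ)
          linarith [htail2]
  have hKsumbound : ∑ p ∈ K, DH.s p ^ 2 * qn p
      ≤ 2 * (∑ q ∈ Kb, DHhat.s q ^ 2 * w q) + 2 * (k : ℝ) * σ ^ 2 := by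
    have h1 : ∑ p ∈ K, DH.s p ^ 2 * qn p
        ≤ ∑ p ∈ K, (2 * (∑ q ∈ Kb, (DHhat.s q * (∑ b, DHhat.v q b * DH.v p b)) ^ 2)
            + 2 * σ ^ 2) :=
      Finset.sum_le_sum fun p _ => htermK p
    have h2 : ∑ p ∈ K, (2 * (∑ q ∈ Kb, (DHhat.s q * (∑ b, DHhat.v q b * DH.v p b)) ^ 2)
          + 2 * σ ^ 2)
        = 2 * (∑ p ∈ K, ∑ q ∈ Kb, (DHhat.s q * (∑ b, DHhat.v q b * DH.v p b)) ^ 2)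
          + 2 * (K.card : ℝ) * σ ^ 2 := by
      rw [Finset.sum_add_distrib, Finset.sum_const, ← Finset.mul_sum, nsmul_eq_mul]
      ring
    have h3 : ∑ p ∈ K, ∑ q ∈ Kb, (DHhat.s q * (∑ b, DHhat.v q b * DH.v p b)) ^ 2
        = ∑ q ∈ Kb, DHhat.s q ^ 2 * w q := by
      rw [Finset.sum_comm]
      refine Finset.sum_congr rfl fun q _ => ?_
      simp only [hw]
      rw [Finset.mul_sum]
      exact Finset.sum_congr rfl fun p _ => by ring
    have h4 : 2 * (K.card : ℝ) * σ ^ 2 ≤ 2 * (k : ℝ) * σ ^ 2 := by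
      have h5 : (2 : ℝ) * (K.card : ℝ) ≤ 2 * (k : ℝ) := by linarith
      exact mul_le_mul_of_nonneg_right h5 (sq_nonneg σ)
    calc ∑ p ∈ K, DH.s p ^ 2 * qn p
        ≤ 2 * (∑ p ∈ K, ∑ q ∈ Kb, (DHhat.s q * (∑ b, DHhat.v q b * DH.v p b)) ^ 2)
          + 2 * (K.card : ℝ) * σ ^ 2 := by rw [← h2]; exact h1
      _ = 2 * (∑ q ∈ Kb, DHhat.s q ^ 2 * w q) + 2 * (K.card : ℝ) * σ ^ 2 := by rw [h3]
      _ ≤ 2 * (∑ q ∈ Kb, DHhat.s q ^ 2 * w q) + 2 * (k : ℝ) * σ ^ 2 := by linarith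
  -- total bound on A2
  have boundA2 : frobNorm A2 ^ 2 ≤ 5 * tail + 6 * (k : ℝ) * σ ^ 2 := by
    rw [hfrobA2]
    have hsplitall : ∑ p, DH.s p ^ 2 * qn p
        = ∑ p ∈ K, DH.s p ^ 2 * qn p + ∑ p ∈ Kb, DH.s p ^ 2 * qn p := by
      rw [hK, hKb]
      exact (Finset.sum_filter_add_sum_filter_not Finset.univ
        (fun q : Fin (min m n) => (q : ℕ) < k) _).symm
    rw [hsplitall]
    have hBB : ∑ q ∈ Kb, DHhat.s q ^ 2 * w q ≤ 2 * tail + 2 * (k : ℝ) * σ ^ 2 :=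
      le_trans hB hK2s
    linarith [hKsumbound, hKbtail]
  -- final
  have htri : frobNorm (DHhat.trunc k - H) ≤ frobNorm A1 + frobNorm A2 := by
    rw [claim1]
    exact frob_sub_triangle A1 A2
  have hf0 := frob_nonneg (DHhat.trunc k - H)
  have hf1 := frob_nonneg A1
  have hf2 := frob_nonneg A2
  have hkσ : 0 ≤ (k : ℝ) * σ ^ 2 :=
    mul_nonneg (Nat.cast_nonneg k) (sq_nonneg σ)
  have hmul : frobNorm (DHhat.trunc k - H) * frobNorm (DHhat.trunc k - H)
      ≤ (frobNorm A1 + frobNorm A2) * (frobNorm A1 + frobNorm A2) :=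
    mul_le_mul htri htri hf0 (add_nonneg hf1 hf2)
  nlinarith [boundA1, boundA2, sq_nonneg (frobNorm A1 - frobNorm A2)]
end
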